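/- arXiv:1209.4956 — 9 statements merged into one kernel-verified Lean document; each statement's English description precedes it below -/
import Mathlib

section
/- Let u be an affine permutation and let a < b be integers with b − a ≤ k. For an affine permutation v, let ℓ(v) denote the number of pairs (i, j) with 1 ≤ i ≤ n, i < j, and v(i) > v(j) (this set of pairs is finite). Then ℓ(u ∘ t_{a,b}) = ℓ(u) + 1 if and only if u(a) < u(b) and for every integer i with a < i < b, either u(i) < u(a) or u(i) > u(b). -/
open Function

/-- The affine transposition `t_{a,b}` of period `n`: it exchanges `a + m*n` and
`b + m*n` for every `m : ℤ` and fixes all other integers. -/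
def affT (n a b : ℤ) : ℤ → ℤ := fun i =>
  if (i - a) % n = 0 then i - a + b
  else if (i - b) % n = 0 then i - b + a
  else i

/-- `u` is an affine permutation of period `n`: a bijection of `ℤ` with
`u (i + n) = u i + n` and `∑_{i=1}^{n} u i = n (n+1) / 2`. -/
def IsAffinePerm (n : ℤ) (u : ℤ → ℤ) : Prop :=
  Function.Bijective u ∧ (∀ i : ℤ, u (i + n) = u i + n) ∧
    ∑ i ∈ Finset.Icc (1 : ℤ) n, u i = n * (n + 1) / 2

/-- The operator `t_{a,b}` is defined at `u`:
`u a ≤ 0 < u b` and for every `a < i < b`, either `u i < u a` or `u i > u b`. -/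
def DefinedAt (u : ℤ → ℤ) (a b : ℤ) : Prop :=
  u a ≤ 0 ∧ 0 < u b ∧ ∀ i : ℤ, a < i → i < b → u i < u a ∨ u b < u i

/-- `u` is 0-grassmannian: the positions of the values `1, 2, …, n` under `u`
appear in increasing order, i.e. `u⁻¹ 1 < u⁻¹ 2 < ⋯ < u⁻¹ n`. -/
def IsGrassmannian (n : ℤ) (u : ℤ → ℤ) : Prop :=
  ∀ i j p q : ℤ, 1 ≤ i → i < j → j ≤ n → u p = i → u q = j → p < q

/-- The composite `u · t_{a,b} · t_{c,d}` is defined. -/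
def Def2 (n : ℤ) (u : ℤ → ℤ) (a b c d : ℤ) : Prop :=
  DefinedAt u a b ∧ DefinedAt (u ∘ affT n a b) c d

/-- The composite `u · t_{a₁,b₁} · t_{a₂,b₂} · t_{a₃,b₃}` is defined. -/
def Def3 (n : ℤ) (u : ℤ → ℤ) (a₁ b₁ a₂ b₂ a₃ b₃ : ℤ) : Prop :=
  DefinedAt u a₁ b₁ ∧ DefinedAt (u ∘ affT n a₁ b₁) a₂ b₂ ∧
    DefinedAt ((u ∘ affT n a₁ b₁) ∘ affT n a₂ b₂) a₃ b₃

/-- The length of an affine permutation: the number of pairs `(i, j)` with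
`1 ≤ i ≤ n`, `i < j` and `v i > v j`. -/
noncomputable def affLen (n : ℤ) (v : ℤ → ℤ) : ℕ :=
  Set.ncard {p : ℤ × ℤ | 1 ≤ p.1 ∧ p.1 ≤ n ∧ p.1 < p.2 ∧ v p.2 < v p.1}

section Aux

variable {n a b i : ℤ}

lemma dvd_small {n m : ℤ} (hn : 0 < n) (h : n ∣ m) (h1 : -n < m) (h2 : m < n) : m = 0 := by
  rcases h with ⟨d, rfl⟩
  rcases lt_trichotomy d 0 with h | h | h
  · nlinarith
  · simp [h]
  · nlinarith

lemma dvd_shift (m : ℤ) (h : n ∣ i) : n ∣ i + m * n :=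
  dvd_add h ⟨m, by ring⟩

lemma dvd_unshift (m : ℤ) (h : n ∣ i + m * n) : n ∣ i := by
  have : i = (i + m * n) - n * m := by ring
  rw [this]; exact dvd_sub h ⟨m, rfl⟩

lemma affT_eq1 (h : n ∣ i - a) : affT n a b i = i + (b - a) := by
  unfold affT
  rw [if_pos (Int.dvd_iff_emod_eq_zero.1 h)]
  ring

lemma affT_eq2 (hn : 0 < n) (hab : a < b) (hban : b - a < n) (h : n ∣ i - b) :
    affT n a b i = i - (b - a) := by
  unfold affT
  have h1 : ¬ (i - a) % n = 0 := by
    intro h1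
    have h2 : n ∣ i - a := Int.dvd_iff_emod_eq_zero.2 h1
    have h3 : n ∣ b - a := by
      have h4 := dvd_sub h2 h
      simpa using h4
    have := dvd_small hn h3 (by omega) hban
    omega
  rw [if_neg h1, if_pos (Int.dvd_iff_emod_eq_zero.1 h)]
  ring

lemma affT_eq3 (h1 : ¬ n ∣ i - a) (h2 : ¬ n ∣ i - b) : affT n a b i = i := by
  unfold affT
  rw [if_neg (fun h => h1 (Int.dvd_iff_emod_eq_zero.2 h)),
    if_neg (fun h => h2 (Int.dvd_iff_emod_eq_zero.2 h))]

lemma affT_invol (hn : 0 < n) (hab : a < b) (hban : b - a < n) (i : ℤ) :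
    affT n a b (affT n a b i) = i := by
  by_cases h1 : n ∣ i - a
  · rw [affT_eq1 h1]
    have e : i + (b - a) - b = i - a := by ring
    have h2 : n ∣ i + (b - a) - b := e ▸ h1
    rw [affT_eq2 hn hab hban h2]; ring
  · by_cases h2 : n ∣ i - b
    · rw [affT_eq2 hn hab hban h2]
      have e : i - (b - a) - a = i - b := by ring
      have h3 : n ∣ i - (b - a) - a := e ▸ h2
      rw [affT_eq1 h3]; ring
    · rw [affT_eq3 h1 h2, affT_eq3 h1 h2]

lemma affT_shift (hn : 0 < n) (hab : a < b) (hban : b - a < n) (i m : ℤ) :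
    affT n a b (i + m * n) = affT n a b i + m * n := by
  have e1 : i + m * n - a = (i - a) + m * n := by ring
  have e2 : i + m * n - b = (i - b) + m * n := by ring
  by_cases h1 : n ∣ i - a
  · rw [affT_eq1 h1, affT_eq1 (e1 ▸ dvd_shift m h1)]; ring
  · by_cases h2 : n ∣ i - b
    · rw [affT_eq2 hn hab hban h2, affT_eq2 hn hab hban (e2 ▸ dvd_shift m h2)]; ring
    · rw [affT_eq3 h1 h2, affT_eq3 (fun h => h1 (dvd_unshift m (e1 ▸ h)))
        (fun h => h2 (dvd_unshift m (e2 ▸ h)))]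

end Aux

section Norm

variable {n : ℤ}

/-- Shift a pair by a multiple of `n` so the first coordinate lies in `[1, n]`. -/
def normp (n : ℤ) (p : ℤ × ℤ) : ℤ × ℤ :=
  (p.1 - ((p.1 - 1) / n) * n, p.2 - ((p.1 - 1) / n) * n)

lemma normp_spec (p : ℤ × ℤ) : ∃ m : ℤ, normp n p = (p.1 - m * n, p.2 - m * n) :=
  ⟨(p.1 - 1) / n, rfl⟩

lemma normp_fst (hn : 0 < n) (p : ℤ × ℤ) :
    1 ≤ (normp n p).1 ∧ (normp n p).1 ≤ n := by
  have h1 : (p.1 - 1) % n = (p.1 - 1) - n * ((p.1 - 1) / n) := Int.emod_def _ _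
  have h2 : 0 ≤ (p.1 - 1) % n := Int.emod_nonneg _ (by omega)
  have h3 : (p.1 - 1) % n < n := Int.emod_lt_of_pos _ hn
  have h4 : n * ((p.1 - 1) / n) = ((p.1 - 1) / n) * n := mul_comm _ _
  unfold normp
  constructor <;> simp only [] <;> omega

lemma normp_shift (hn : 0 < n) (p : ℤ × ℤ) (m : ℤ) :
    normp n (p.1 + m * n, p.2 + m * n) = normp n p := by
  unfold normp
  have h1 : (p.1 + m * n - 1) / n = (p.1 - 1) / n + m := by
    have : p.1 + m * n - 1 = (p.1 - 1) + m * n := by ring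
    rw [this, Int.add_mul_ediv_right _ _ (by omega : n ≠ 0)]
  simp only [h1, Prod.mk.injEq]
  constructor <;> ring

lemma normp_eq_self (hn : 0 < n) {p : ℤ × ℤ} (h1 : 1 ≤ p.1) (h2 : p.1 ≤ n) :
    normp n p = p := by
  unfold normp
  have : (p.1 - 1) / n = 0 := Int.ediv_eq_zero_of_lt (by omega) (by omega)
  simp [this]

lemma rep_unique (hn : 0 < n) {x y : ℤ} (h : n ∣ x - y) (h1 : 1 ≤ x) (h2 : x ≤ n)
    (h3 : 1 ≤ y) (h4 : y ≤ n) : x = y := by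
  have := dvd_small hn h (by omega) (by omega)
  omega

end Norm

section Inv

variable {n : ℤ} {w : ℤ → ℤ}

def invSet (n : ℤ) (w : ℤ → ℤ) : Set (ℤ × ℤ) :=
  {p : ℤ × ℤ | 1 ≤ p.1 ∧ p.1 ≤ n ∧ p.1 < p.2 ∧ w p.2 < w p.1}

lemma affLen_eq (n : ℤ) (w : ℤ → ℤ) : affLen n w = (invSet n w).ncard := rfl

lemma equiv_mul (hw : ∀ i, w (i + n) = w i + n) (m i : ℤ) :
    w (i + m * n) = w i + m * n := by
  induction m using Int.induction_on with
  | zero => simp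
  | succ j ih =>
      have e : i + (j + 1 : ℤ) * n = (i + j * n) + n := by ring
      rw [e, hw, ih]; ring
  | pred j ih =>
      have e : i + (-j : ℤ) * n = (i + (-j - 1) * n) + n := by ring
      have := hw (i + (-j - 1) * n)
      rw [← e] at this
      omega

lemma equiv_sub (hw : ∀ i, w (i + n) = w i + n) (m i : ℤ) :
    w (i - m * n) = w i - m * n := by
  have := equiv_mul hw (-m) i
  simpa [sub_eq_add_neg] using this

lemma invSet_finite (hn : 0 < n) (hw : ∀ i, w (i + n) = w i + n) :
    (invSet n w).Finite := by
  classical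
  have hne : (Finset.Icc (1 : ℤ) n).Nonempty := ⟨1, Finset.mem_Icc.2 ⟨le_refl 1, hn⟩⟩
  set M : ℤ := ((Finset.Icc (1 : ℤ) n).image w).max' (hne.image _) with hM
  set L : ℤ := ((Finset.Icc (1 : ℤ) n).image (fun i => w i - i)).min' (hne.image _) with hL
  have hlb : ∀ j : ℤ, j + L ≤ w j := by
    intro j
    have hr1 : 1 ≤ (j - 1) % n + 1 := by
      have := Int.emod_nonneg (j - 1) (by omega : n ≠ 0); omega
    have hr2 : (j - 1) % n + 1 ≤ n := by
      have := Int.emod_lt_of_pos (j - 1) hn; omega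
    have hmem : ((j - 1) % n + 1) ∈ Finset.Icc (1 : ℤ) n := by
      simp [hr1, hr2]
    have hLle : L ≤ w ((j - 1) % n + 1) - ((j - 1) % n + 1) :=
      Finset.min'_le _ _ (Finset.mem_image_of_mem _ hmem)
    have hdecomp : j = ((j - 1) % n + 1) + ((j - 1) / n) * n := by
      have h5 := Int.emod_add_mul_ediv (j - 1) n
      have h6 : n * ((j - 1) / n) = ((j - 1) / n) * n := mul_comm _ _
      omega
    have := equiv_mul hw ((j - 1) / n) ((j - 1) % n + 1)
    rw [← hdecomp] at this
    have hc : n * ((j - 1) / n) = ((j - 1) / n) * n := mul_comm _ _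
    omega
  apply Set.Finite.subset
    (Set.finite_Icc ((1 : ℤ), (2 : ℤ)) ((n : ℤ), (M - L)))
  intro p hp
  obtain ⟨h1, h2, h3, h4⟩ := hp
  have hiM : w p.1 ≤ M :=
    Finset.le_max' _ _ (Finset.mem_image_of_mem _ (Finset.mem_Icc.2 ⟨h1, h2⟩))
  have hj := hlb p.2
  simp only [Set.mem_Icc, Prod.le_def]
  omega

end Inv

section Rev

variable {n a b : ℤ}

lemma rev_iff (hn : 0 < n) (hab : a < b) (hban : b - a < n) {i j : ℤ} (hij : i < j) :
    affT n a b j < affT n a b i ↔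
      (n ∣ i - a ∧ j < i + (b - a)) ∨ (n ∣ j - b ∧ j - (b - a) < i) ∨
        (n ∣ i - a ∧ j = i + (b - a)) := by
  have hnd : ¬ n ∣ (b - a) := fun h => by
    have := dvd_small hn h (by omega) hban; omega
  have hAB : ∀ x : ℤ, n ∣ x - a → n ∣ x - b → False := by
    intro x h1 h2
    apply hnd
    have h3 := dvd_sub h1 h2
    have e : (x - a) - (x - b) = b - a := by ring
    rwa [e] at h3
  by_cases hia : n ∣ i - a
  · have hib : ¬ n ∣ i - b := fun h => hAB i hia h
    rw [affT_eq1 hia]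
    by_cases hjb : n ∣ j - b
    · have hja : ¬ n ∣ j - a := fun h => hAB j h hjb
      rw [affT_eq2 hn hab hban hjb]
      have hd : n ∣ (j - i - (b - a)) := by
        have h3 := dvd_sub hjb hia
        have e : (j - b) - (i - a) = j - i - (b - a) := by ring
        rwa [e] at h3
      constructor
      · intro hlt
        have h0 : j - i - (b - a) = 0 := dvd_small hn hd (by omega) (by omega)
        exact Or.inr (Or.inr ⟨hia, by omega⟩)
      · rintro (⟨_, h⟩ | ⟨_, h⟩ | ⟨_, h⟩) <;> omega
    · by_cases hja : n ∣ j - a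
      · rw [affT_eq1 hja]
        have hd : n ∣ j - i := by
          have h3 := dvd_sub hja hia
          have e : (j - a) - (i - a) = j - i := by ring
          rwa [e] at h3
        constructor
        · intro hlt; omega
        · rintro (⟨_, h⟩ | ⟨h, _⟩ | ⟨_, h⟩)
          · have h0 : j - i = 0 := dvd_small hn hd (by omega) (by omega)
            omega
          · exact absurd h hjb
          · exfalso; apply hnd; rwa [h, add_sub_cancel_left] at hd
      · rw [affT_eq3 hja hjb]
        constructor
        · intro hlt; exact Or.inl ⟨hia, by omega⟩
        · rintro (⟨_, h⟩ | ⟨h, _⟩ | ⟨_, h⟩)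
          · omega
          · exact absurd h hjb
          · exfalso; apply hjb
            have e : j - b = i - a := by omega
            rwa [e]
  · by_cases hib : n ∣ i - b
    · rw [affT_eq2 hn hab hban hib]
      by_cases hja : n ∣ j - a
      · rw [affT_eq1 hja]
        have hjb : ¬ n ∣ j - b := fun h => hAB j hja h
        constructor
        · intro hlt; omega
        · rintro (⟨h, _⟩ | ⟨h, _⟩ | ⟨h, _⟩)
          · exact absurd h hia
          · exact absurd h hjb
          · exact absurd h hia
      · by_cases hjb : n ∣ j - b
        · rw [affT_eq2 hn hab hban hjb]
          have hd : n ∣ j - i := by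
            have h3 := dvd_sub hjb hib
            have e : (j - b) - (i - b) = j - i := by ring
            rwa [e] at h3
          constructor
          · intro hlt; omega
          · rintro (⟨h, _⟩ | ⟨_, h⟩ | ⟨h, _⟩)
            · exact absurd h hia
            · have h0 : j - i = 0 := dvd_small hn hd (by omega) (by omega)
              omega
            · exact absurd h hia
        · rw [affT_eq3 hja hjb]
          constructor
          · intro hlt; omega
          · rintro (⟨h, _⟩ | ⟨h, _⟩ | ⟨h, _⟩)
            · exact absurd h hia
            · exact absurd h hjb
            · exact absurd h hia
    · rw [affT_eq3 hia hib]
      by_cases hja : n ∣ j - a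
      · rw [affT_eq1 hja]
        have hjb : ¬ n ∣ j - b := fun h => hAB j hja h
        constructor
        · intro hlt; omega
        · rintro (⟨h, _⟩ | ⟨h, _⟩ | ⟨h, _⟩)
          · exact absurd h hia
          · exact absurd h hjb
          · exact absurd h hia
      · by_cases hjb : n ∣ j - b
        · rw [affT_eq2 hn hab hban hjb]
          constructor
          · intro hlt; exact Or.inr (Or.inl ⟨hjb, by omega⟩)
          · rintro (⟨h, _⟩ | ⟨_, h⟩ | ⟨h, _⟩)
            · exact absurd h hia
            · omega
            · exact absurd h hia
        · rw [affT_eq3 hja hjb]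
          constructor
          · intro hlt; omega
          · rintro (⟨h, _⟩ | ⟨h, _⟩ | ⟨h, _⟩)
            · exact absurd h hia
            · exact absurd h hjb
            · exact absurd h hia

end Rev

section RSet

variable {n a b : ℤ} {w : ℤ → ℤ}

/-- The set of normalized pairs reversed by the transposition. -/
def Rst (n a b : ℤ) : Set (ℤ × ℤ) :=
  {p : ℤ × ℤ | 1 ≤ p.1 ∧ p.1 ≤ n ∧ p.1 < p.2 ∧ affT n a b p.2 < affT n a b p.1}

lemma normp_pair (hn : 0 < n) (x y : ℤ) :
    ∃ m : ℤ, normp n (x, y) = (x - m * n, y - m * n) ∧ 1 ≤ x - m * n ∧ x - m * n ≤ n := by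
  obtain ⟨m, hm⟩ := normp_spec (n := n) (x, y)
  have h := normp_fst hn (x, y)
  rw [hm] at h
  exact ⟨m, hm, h.1, h.2⟩

lemma invSet_normp (hn : 0 < n) (hw : ∀ i, w (i + n) = w i + n) {x y : ℤ} (hxy : x < y) :
    normp n (x, y) ∈ invSet n w ↔ w y < w x := by
  obtain ⟨m, hm, h1, h2⟩ := normp_pair hn x y
  rw [hm]
  simp only [invSet, Set.mem_setOf_eq]
  have e1 : w (x - m * n) = w x - m * n := equiv_sub hw m x
  have e2 : w (y - m * n) = w y - m * n := equiv_sub hw m y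
  rw [e1, e2]
  omega

lemma Rst_eq (hn : 0 < n) (hab : a < b) (hban : b - a < n) :
    Rst n a b = ((fun c => normp n (a, c)) '' Set.Ioo a b) ∪
      ((fun c => normp n (c, b)) '' Set.Ioo a b) ∪ {normp n (a, b)} := by
  ext p
  constructor
  · rintro ⟨h1, h2, h3, h4⟩
    rw [rev_iff hn hab hban h3] at h4
    rcases h4 with ⟨hd, hlt⟩ | ⟨hd, hlt⟩ | ⟨hd, heq⟩
    · obtain ⟨m, hm⟩ := hd
      have hc1 : n * m = m * n := mul_comm _ _
      have hc2 : (-m) * n = -(m * n) := by ring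
      left; left
      refine ⟨p.2 - m * n, by simp only [Set.mem_Ioo]; omega, ?_⟩
      show normp n (a, p.2 - m * n) = p
      have ha : ((a : ℤ), p.2 - m * n) = ((p.1, p.2).1 + (-m) * n, (p.1, p.2).2 + (-m) * n) := by
        simp only [Prod.mk.injEq]
        constructor <;> omega
      rw [ha, normp_shift hn (p.1, p.2) (-m), Prod.mk.eta]
      exact normp_eq_self hn h1 h2
    · obtain ⟨m, hm⟩ := hd
      have hc1 : n * m = m * n := mul_comm _ _
      have hc2 : (-m) * n = -(m * n) := by ring
      left; right
      refine ⟨p.1 - m * n, by simp only [Set.mem_Ioo]; omega, ?_⟩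
      show normp n (p.1 - m * n, b) = p
      have ha : (p.1 - m * n, (b : ℤ)) = ((p.1, p.2).1 + (-m) * n, (p.1, p.2).2 + (-m) * n) := by
        simp only [Prod.mk.injEq]
        constructor <;> omega
      rw [ha, normp_shift hn (p.1, p.2) (-m), Prod.mk.eta]
      exact normp_eq_self hn h1 h2
    · obtain ⟨m, hm⟩ := hd
      have hc1 : n * m = m * n := mul_comm _ _
      have hc2 : (-m) * n = -(m * n) := by ring
      right
      show p = normp n (a, b)
      have ha : ((a : ℤ), (b : ℤ)) = ((p.1, p.2).1 + (-m) * n, (p.1, p.2).2 + (-m) * n) := by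
        simp only [Prod.mk.injEq]
        constructor <;> omega
      rw [ha, normp_shift hn (p.1, p.2) (-m), Prod.mk.eta]
      exact (normp_eq_self hn h1 h2).symm
  · intro hp
    rcases hp with (⟨c, hc, hpc⟩ | ⟨c, hc, hpc⟩) | hp
    · simp only [Set.mem_Ioo] at hc
      obtain ⟨m, hm, h1, h2⟩ := normp_pair hn a c
      replace hpc : normp n (a, c) = p := hpc
      rw [hm] at hpc
      subst hpc
      refine ⟨h1, h2, show (a - m*n : ℤ) < c - m*n by omega, ?_⟩
      show affT n a b (c - m*n) < affT n a b (a - m*n)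
      rw [rev_iff hn hab hban (by omega : (a - m*n : ℤ) < c - m*n)]
      exact Or.inl ⟨⟨-m, by ring⟩, by omega⟩
    · simp only [Set.mem_Ioo] at hc
      obtain ⟨m, hm, h1, h2⟩ := normp_pair hn c b
      replace hpc : normp n (c, b) = p := hpc
      rw [hm] at hpc
      subst hpc
      refine ⟨h1, h2, show (c - m*n : ℤ) < b - m*n by omega, ?_⟩
      show affT n a b (b - m*n) < affT n a b (c - m*n)
      rw [rev_iff hn hab hban (by omega : (c - m*n : ℤ) < b - m*n)]
      exact Or.inr (Or.inl ⟨⟨-m, by ring⟩, by omega⟩)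
    · simp only [Set.mem_singleton_iff] at hp
      subst hp
      obtain ⟨m, hm, h1, h2⟩ := normp_pair hn a b
      rw [hm]
      refine ⟨h1, h2, show (a - m*n : ℤ) < b - m*n by omega, ?_⟩
      show affT n a b (b - m*n) < affT n a b (a - m*n)
      rw [rev_iff hn hab hban (by omega : (a - m*n : ℤ) < b - m*n)]
      exact Or.inr (Or.inr ⟨⟨-m, by ring⟩, by omega⟩)
end RSet

section Count

variable {n a b : ℤ} {u : ℤ → ℤ}

lemma injOn_f1 (hn : 0 < n) :
    Set.InjOn (fun c => normp n (a, c)) (Set.Ioo a b) := by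
  intro c _ c' _ h
  have h2 := congrArg Prod.snd h
  simp only [normp] at h2
  omega

lemma injOn_f2 (hn : 0 < n) :
    Set.InjOn (fun c => normp n (c, b)) (Set.Ioo a b) := by
  intro c _ c' _ h
  have h1 := congrArg Prod.fst h
  have h2 := congrArg Prod.snd h
  simp only [normp] at h1 h2
  omega

lemma mem_f1 (hn : 0 < n) {p : ℤ × ℤ} (hp : p ∈ (fun c => normp n (a, c)) '' Set.Ioo a b) :
    n ∣ p.1 - a ∧ a < a + (p.2 - p.1) ∧ a + (p.2 - p.1) < b := by
  obtain ⟨c, hc, hpc⟩ := hp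
  simp only [Set.mem_Ioo] at hc
  replace hpc : normp n (a, c) = p := hpc
  obtain ⟨m, hm, h1, h2⟩ := normp_pair hn a c
  rw [hm] at hpc
  subst hpc
  refine ⟨⟨-m, by simp only []; ring⟩, by simp only []; omega, by simp only []; omega⟩

lemma mem_f2 (hn : 0 < n) {p : ℤ × ℤ} (hp : p ∈ (fun c => normp n (c, b)) '' Set.Ioo a b) :
    n ∣ p.2 - b ∧ a < b - (p.2 - p.1) ∧ b - (p.2 - p.1) < b := by
  obtain ⟨c, hc, hpc⟩ := hp
  simp only [Set.mem_Ioo] at hc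
  replace hpc : normp n (c, b) = p := hpc
  obtain ⟨m, hm, h1, h2⟩ := normp_pair hn c b
  rw [hm] at hpc
  subst hpc
  refine ⟨⟨-m, by simp only []; ring⟩, by simp only []; omega, by simp only []; omega⟩

lemma mem_f3 (hn : 0 < n) {p : ℤ × ℤ} (hp : p ∈ ({normp n (a, b)} : Set (ℤ × ℤ))) :
    p.2 - p.1 = b - a := by
  simp only [Set.mem_singleton_iff] at hp
  obtain ⟨m, hm, h1, h2⟩ := normp_pair hn a b
  rw [hp, hm]
  simp only []
  ring

lemma disj12 (hn : 0 < n) (hab : a < b) (hban : b - a < n) :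
    Disjoint ((fun c => normp n (a, c)) '' Set.Ioo a b)
      ((fun c => normp n (c, b)) '' Set.Ioo a b) := by
  rw [Set.disjoint_left]
  intro p hp1 hp2
  obtain ⟨hd1, hl1, hl2⟩ := mem_f1 hn hp1
  obtain ⟨hd2, hl3, hl4⟩ := mem_f2 hn hp2
  have hd : n ∣ (p.2 - p.1) - (b - a) := by
    have h3 := dvd_sub hd2 hd1
    have e : (p.2 - b) - (p.1 - a) = (p.2 - p.1) - (b - a) := by ring
    rwa [e] at h3
  have := dvd_small hn hd (by omega) (by omega)
  omega

lemma disj3 (hn : 0 < n) (hab : a < b) (hban : b - a < n) :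
    Disjoint (((fun c => normp n (a, c)) '' Set.Ioo a b) ∪
      ((fun c => normp n (c, b)) '' Set.Ioo a b)) ({normp n (a, b)} : Set (ℤ × ℤ)) := by
  rw [Set.disjoint_left]
  intro p hp1 hp2
  have h3 := mem_f3 hn hp2
  rcases hp1 with hp | hp
  · have := mem_f1 hn hp; omega
  · have := mem_f2 hn hp; omega

lemma ncard_Ioo_int (a b : ℤ) : (Set.Ioo a b).ncard = (b - a - 1).toNat := by
  rw [← Finset.coe_Ioo, Set.ncard_coe_finset, Int.card_Ioo]

lemma Rst_ncard (hn : 0 < n) (hab : a < b) (hban : b - a < n) :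
    (Rst n a b).ncard = 2 * (b - a - 1).toNat + 1 := by
  rw [Rst_eq hn hab hban]
  have hf1 : ((fun c => normp n (a, c)) '' Set.Ioo a b).Finite :=
    (Set.finite_Ioo a b).image _
  have hf2 : ((fun c => normp n (c, b)) '' Set.Ioo a b).Finite :=
    (Set.finite_Ioo a b).image _
  rw [Set.ncard_union_eq (disj3 hn hab hban) (hf1.union hf2) (Set.finite_singleton _),
    Set.ncard_union_eq (disj12 hn hab hban) hf1 hf2,
    Set.ncard_image_of_injOn (injOn_f1 hn), Set.ncard_image_of_injOn (injOn_f2 hn),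
    Set.ncard_singleton, ncard_Ioo_int]
  omega

lemma Rst_finite (hn : 0 < n) (hab : a < b) (hban : b - a < n) : (Rst n a b).Finite := by
  rw [Rst_eq hn hab hban]
  exact (((Set.finite_Ioo a b).image _).union ((Set.finite_Ioo a b).image _)).union
    (Set.finite_singleton _)

lemma inv_inter_Rst (hn : 0 < n) (hab : a < b) (hban : b - a < n)
    (hu_eq : ∀ i, u (i + n) = u i + n) :
    invSet n u ∩ Rst n a b =
      ((fun c => normp n (a, c)) '' {c | c ∈ Set.Ioo a b ∧ u c < u a}) ∪
      ((fun c => normp n (c, b)) '' {c | c ∈ Set.Ioo a b ∧ u b < u c}) ∪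
      (if u b < u a then ({normp n (a, b)} : Set (ℤ × ℤ)) else ∅) := by
  rw [Rst_eq hn hab hban, Set.inter_union_distrib_left, Set.inter_union_distrib_left]
  congr 1
  · congr 1
    · ext p
      constructor
      · rintro ⟨hpi, c, hc, hpc⟩
        refine ⟨c, ⟨hc, ?_⟩, hpc⟩
        replace hpc : normp n (a, c) = p := hpc
        rw [← hpc] at hpi
        rw [Set.mem_Ioo] at hc
        exact (invSet_normp hn hu_eq hc.1).1 hpi
      · rintro ⟨c, ⟨hc, hcu⟩, hpc⟩
        replace hpc : normp n (a, c) = p := hpc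
        rw [Set.mem_Ioo] at hc
        exact ⟨hpc ▸ (invSet_normp hn hu_eq hc.1).2 hcu, c, Set.mem_Ioo.2 hc, hpc⟩
    · ext p
      constructor
      · rintro ⟨hpi, c, hc, hpc⟩
        refine ⟨c, ⟨hc, ?_⟩, hpc⟩
        replace hpc : normp n (c, b) = p := hpc
        rw [← hpc] at hpi
        rw [Set.mem_Ioo] at hc
        exact (invSet_normp hn hu_eq hc.2).1 hpi
      · rintro ⟨c, ⟨hc, hcu⟩, hpc⟩
        replace hpc : normp n (c, b) = p := hpc
        rw [Set.mem_Ioo] at hc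
        exact ⟨hpc ▸ (invSet_normp hn hu_eq hc.2).2 hcu, c, Set.mem_Ioo.2 hc, hpc⟩
  · by_cases h : u b < u a
    · rw [if_pos h]
      ext p
      simp only [Set.mem_inter_iff, Set.mem_singleton_iff]
      constructor
      · rintro ⟨_, hp⟩; exact hp
      · rintro hp
        exact ⟨hp ▸ (invSet_normp hn hu_eq hab).2 h, hp⟩
    · rw [if_neg h]
      ext p
      simp only [Set.mem_inter_iff, Set.mem_singleton_iff, Set.mem_empty_iff_false, iff_false]
      rintro ⟨hpi, hp⟩
      exact h ((invSet_normp hn hu_eq hab).1 (hp ▸ hpi))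

end Count

section Bij

variable {n a b : ℤ} {u : ℤ → ℤ}

/-- Recovery data for the sorted-normalized image of a pair under the transposition. -/
lemma F_recover (hn : 0 < n) (hab : a < b) (hban : b - a < n) (x y : ℤ) :
    ∃ m : ℤ, normp n (affT n a b x, affT n a b y) =
        (affT n a b x - m * n, affT n a b y - m * n) ∧
      1 ≤ affT n a b x - m * n ∧ affT n a b x - m * n ≤ n ∧
      affT n a b (affT n a b x - m * n) = x - m * n ∧
      affT n a b (affT n a b y - m * n) = y - m * n := by
  obtain ⟨m, hm, h1, h2⟩ := normp_pair hn (affT n a b x) (affT n a b y)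
  refine ⟨m, hm, h1, h2, ?_, ?_⟩
  · have e : affT n a b x - m * n = affT n a b x + (-m) * n := by ring
    rw [e, affT_shift hn hab hban, affT_invol hn hab hban]; ring
  · have e : affT n a b y - m * n = affT n a b y + (-m) * n := by ring
    rw [e, affT_shift hn hab hban, affT_invol hn hab hban]; ring

lemma normp_recover (hn : 0 < n) {q : ℤ × ℤ} (m : ℤ) (h1 : 1 ≤ q.1) (h2 : q.1 ≤ n) :
    normp n (q.1 - m * n, q.2 - m * n) = q := by
  have e : ((q.1 - m * n, q.2 - m * n) : ℤ × ℤ) =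
      ((q.1, q.2).1 + (-m) * n, (q.1, q.2).2 + (-m) * n) := by
    simp only [Prod.mk.injEq]; constructor <;> ring
  rw [e, normp_shift hn (q.1, q.2) (-m), Prod.mk.eta]
  exact normp_eq_self hn h1 h2

lemma nrev_bij (hn : 0 < n) (hab : a < b) (hban : b - a < n)
    (hu_eq : ∀ i, u (i + n) = u i + n) :
    {p ∈ invSet n u | affT n a b p.1 < affT n a b p.2} =
      (fun p : ℤ × ℤ => normp n (affT n a b p.1, affT n a b p.2)) ''
        {p ∈ invSet n (u ∘ affT n a b) | affT n a b p.1 < affT n a b p.2} ∧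
    Set.InjOn (fun p : ℤ × ℤ => normp n (affT n a b p.1, affT n a b p.2))
      {p ∈ invSet n (u ∘ affT n a b) | affT n a b p.1 < affT n a b p.2} := by
  have hut_eq : ∀ i, (u ∘ affT n a b) (i + n) = (u ∘ affT n a b) i + n := by
    intro i
    have e : i + n = i + 1 * n := by ring
    simp only [Function.comp_apply, e, affT_shift hn hab hban]
    rw [show affT n a b i + 1 * n = affT n a b i + n by ring, hu_eq]
  constructor
  · ext q
    constructor
    · rintro ⟨⟨hq1, hq2, hq3, hq4⟩, hq5⟩
      obtain ⟨m, hm, g1, g2, g3, g4⟩ := F_recover hn hab hban q.1 q.2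
      refine ⟨normp n (affT n a b q.1, affT n a b q.2), ⟨⟨?_, ?_, ?_, ?_⟩, ?_⟩, ?_⟩
      · rw [hm]; exact g1
      · rw [hm]; exact g2
      · rw [hm]; simp only []; omega
      · rw [hm]
        show (u ∘ affT n a b) (affT n a b q.2 - m * n) < (u ∘ affT n a b) (affT n a b q.1 - m * n)
        simp only [Function.comp_apply, g3, g4, equiv_sub hu_eq]
        omega
      · rw [hm]
        show affT n a b (affT n a b q.1 - m * n) < affT n a b (affT n a b q.2 - m * n)
        rw [g3, g4]; omega
      · show normp n (affT n a b (normp n (affT n a b q.1, affT n a b q.2)).1,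
          affT n a b (normp n (affT n a b q.1, affT n a b q.2)).2) = q
        rw [hm]
        simp only [g3, g4]
        exact normp_recover hn m hq1 hq2
    · rintro ⟨p, ⟨⟨hp1, hp2, hp3, hp4⟩, hp5⟩, hpq⟩
      obtain ⟨m, hm, g1, g2, g3, g4⟩ := F_recover hn hab hban p.1 p.2
      replace hpq : normp n (affT n a b p.1, affT n a b p.2) = q := hpq
      rw [hm] at hpq
      subst hpq
      simp only [Function.comp_apply] at hp4
      refine ⟨⟨g1, g2, by simp only []; omega, ?_⟩, ?_⟩
      · show u (affT n a b p.2 - m * n) < u (affT n a b p.1 - m * n)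
        rw [equiv_sub hu_eq, equiv_sub hu_eq]
        omega
      · show affT n a b (affT n a b p.1 - m * n) < affT n a b (affT n a b p.2 - m * n)
        rw [g3, g4]; omega
  · intro p ⟨⟨hp1, hp2, _, _⟩, _⟩ p' ⟨⟨hp1', hp2', _, _⟩, _⟩ h
    obtain ⟨m, hm, g1, g2, g3, g4⟩ := F_recover hn hab hban p.1 p.2
    obtain ⟨m', hm', g1', g2', g3', g4'⟩ := F_recover hn hab hban p'.1 p'.2
    replace h : normp n (affT n a b p.1, affT n a b p.2) =
      normp n (affT n a b p'.1, affT n a b p'.2) := h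
    rw [hm, hm'] at h
    have e1 : p.1 - m * n = p'.1 - m' * n := by
      have c1 := congrArg (fun q : ℤ × ℤ => affT n a b q.1) h
      simpa [g3, g3'] using c1
    have e2 : p.2 - m * n = p'.2 - m' * n := by
      have c2 := congrArg (fun q : ℤ × ℤ => affT n a b q.2) h
      simpa [g4, g4'] using c2
    have hd : n ∣ p.1 - p'.1 := by
      have hr : n * (m - m') = m * n - m' * n := by ring
      exact ⟨m - m', by omega⟩
    have hpp : p.1 = p'.1 := rep_unique hn hd hp1 hp2 hp1' hp2'
    have : p.2 = p'.2 := by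
      have hmn : m * n = m' * n := by omega
      omega
    exact Prod.ext hpp this

lemma rev_bij (hn : 0 < n) (hab : a < b) (hban : b - a < n)
    (hu_inj : Function.Injective u) (hu_eq : ∀ i, u (i + n) = u i + n) :
    {p ∈ invSet n (u ∘ affT n a b) | affT n a b p.2 < affT n a b p.1} =
      (fun p : ℤ × ℤ => normp n (affT n a b p.2, affT n a b p.1)) ''
        (Rst n a b \ invSet n u) ∧
    Set.InjOn (fun p : ℤ × ℤ => normp n (affT n a b p.2, affT n a b p.1))
      (Rst n a b \ invSet n u) := by
  constructor
  · ext q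
    constructor
    · rintro ⟨⟨hq1, hq2, hq3, hq4⟩, hq5⟩
      obtain ⟨m, hm, g1, g2, g3, g4⟩ := F_recover hn hab hban q.2 q.1
      simp only [Function.comp_apply] at hq4
      refine ⟨normp n (affT n a b q.2, affT n a b q.1), ⟨⟨?_, ?_, ?_, ?_⟩, ?_⟩, ?_⟩
      · rw [hm]; exact g1
      · rw [hm]; exact g2
      · rw [hm]; simp only []; omega
      · rw [hm]
        show affT n a b (affT n a b q.1 - m * n) < affT n a b (affT n a b q.2 - m * n)
        rw [g3, g4]; omega
      · rw [hm]
        intro hmem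
        obtain ⟨_, _, _, h4⟩ := hmem
        revert h4
        show ¬ (u (affT n a b q.1 - m * n) < u (affT n a b q.2 - m * n))
        rw [equiv_sub hu_eq, equiv_sub hu_eq]
        omega
      · show normp n (affT n a b (normp n (affT n a b q.2, affT n a b q.1)).2,
          affT n a b (normp n (affT n a b q.2, affT n a b q.1)).1) = q
        rw [hm]
        simp only [g3, g4]
        exact normp_recover hn m hq1 hq2
    · rintro ⟨p, ⟨⟨hp1, hp2, hp3, hp4⟩, hp5⟩, hpq⟩
      obtain ⟨m, hm, g1, g2, g3, g4⟩ := F_recover hn hab hban p.2 p.1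
      replace hpq : normp n (affT n a b p.2, affT n a b p.1) = q := hpq
      rw [hm] at hpq
      subst hpq
      have hne : u p.1 ≠ u p.2 := fun h => by have := hu_inj h; omega
      have hlt : u p.1 < u p.2 := by
        by_contra hcon
        push_neg at hcon
        rcases lt_or_eq_of_le hcon with h | h
        · exact hp5 ⟨hp1, hp2, hp3, h⟩
        · exact hne h.symm
      refine ⟨⟨g1, g2, by simp only []; omega, ?_⟩, ?_⟩
      · show (u ∘ affT n a b) (affT n a b p.1 - m * n) <
          (u ∘ affT n a b) (affT n a b p.2 - m * n)
        simp only [Function.comp_apply, g3, g4, equiv_sub hu_eq]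
        omega
      · show affT n a b (affT n a b p.1 - m * n) < affT n a b (affT n a b p.2 - m * n)
        rw [g3, g4]; omega
  · intro p hp p' hp' h
    obtain ⟨⟨hp1, hp2, _, _⟩, _⟩ := hp
    obtain ⟨⟨hp1', hp2', _, _⟩, _⟩ := hp'
    obtain ⟨m, hm, g1, g2, g3, g4⟩ := F_recover hn hab hban p.2 p.1
    obtain ⟨m', hm', g1', g2', g3', g4'⟩ := F_recover hn hab hban p'.2 p'.1
    replace h : normp n (affT n a b p.2, affT n a b p.1) =
      normp n (affT n a b p'.2, affT n a b p'.1) := h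
    rw [hm, hm'] at h
    have e1 : p.2 - m * n = p'.2 - m' * n := by
      have c1 := congrArg (fun q : ℤ × ℤ => affT n a b q.1) h
      simpa [g3, g3'] using c1
    have e2 : p.1 - m * n = p'.1 - m' * n := by
      have c2 := congrArg (fun q : ℤ × ℤ => affT n a b q.2) h
      simpa [g4, g4'] using c2
    have hd : n ∣ p.1 - p'.1 := by
      have hr : n * (m - m') = m * n - m' * n := by ring
      exact ⟨m - m', by omega⟩
    have hpp : p.1 = p'.1 := rep_unique hn hd hp1 hp2 hp1' hp2'
    have : p.2 = p'.2 := by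
      have hmn : m * n = m' * n := by omega
      omega
    exact Prod.ext hpp this

end Bij

section Final

variable {n a b : ℤ} {u : ℤ → ℤ}

lemma comp_equiv (hn : 0 < n) (hab : a < b) (hban : b - a < n)
    (hu_eq : ∀ i, u (i + n) = u i + n) :
    ∀ i, (u ∘ affT n a b) (i + n) = (u ∘ affT n a b) i + n := by
  intro i
  have e : i + n = i + 1 * n := by ring
  simp only [Function.comp_apply, e, affT_shift hn hab hban]
  rw [show affT n a b i + 1 * n = affT n a b i + n by ring, hu_eq]

lemma split_len (hn : 0 < n) (hab : a < b) (hban : b - a < n) {w : ℤ → ℤ}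
    (hw_eq : ∀ i, w (i + n) = w i + n) :
    (invSet n w).ncard = {p ∈ invSet n w | affT n a b p.1 < affT n a b p.2}.ncard +
      {p ∈ invSet n w | affT n a b p.2 < affT n a b p.1}.ncard := by
  have hfin := invSet_finite hn hw_eq
  have hcover : invSet n w = {p ∈ invSet n w | affT n a b p.1 < affT n a b p.2} ∪
      {p ∈ invSet n w | affT n a b p.2 < affT n a b p.1} := by
    ext p
    constructor
    · intro hp
      have hne : affT n a b p.1 ≠ affT n a b p.2 := by
        intro h
        have h2 := congrArg (affT n a b) h
        rw [affT_invol hn hab hban, affT_invol hn hab hban] at h2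
        have := hp.2.2.1
        omega
      rcases lt_or_gt_of_ne hne with h | h
      · exact Or.inl ⟨hp, h⟩
      · exact Or.inr ⟨hp, h⟩
    · rintro (⟨hp, _⟩ | ⟨hp, _⟩) <;> exact hp
  have hdisj : Disjoint {p ∈ invSet n w | affT n a b p.1 < affT n a b p.2}
      {p ∈ invSet n w | affT n a b p.2 < affT n a b p.1} := by
    rw [Set.disjoint_left]
    rintro p ⟨_, h1⟩ ⟨_, h2⟩
    omega
  nth_rewrite 1 [hcover]
  exact Set.ncard_union_eq hdisj (hfin.subset (Set.sep_subset _ _))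
    (hfin.subset (Set.sep_subset _ _))

lemma main_iff (hn : 0 < n) (hab : a < b) (hban : b - a < n)
    (hu_inj : Function.Injective u) (hu_eq : ∀ i, u (i + n) = u i + n) :
    affLen n (u ∘ affT n a b) = affLen n u + 1 ↔
      (u a < u b ∧ ∀ i : ℤ, a < i → i < b → u i < u a ∨ u b < u i) := by
  have hut_eq := comp_equiv hn hab hban hu_eq
  have hfinu := invSet_finite hn hu_eq
  have hfinut := invSet_finite hn hut_eq
  have hRfin := Rst_finite hn hab hban
  have e1 := split_len hn hab hban hut_eq
  have e2 := split_len hn hab hban hu_eq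
  -- non-reversed parts agree
  obtain ⟨hset3, hinj3⟩ := nrev_bij hn hab hban hu_eq
  have e3 : {p ∈ invSet n u | affT n a b p.1 < affT n a b p.2}.ncard =
      {p ∈ invSet n (u ∘ affT n a b) | affT n a b p.1 < affT n a b p.2}.ncard := by
    rw [hset3, Set.ncard_image_of_injOn hinj3]
  -- reversed part of u ∘ t
  obtain ⟨hset4, hinj4⟩ := rev_bij hn hab hban hu_inj hu_eq
  have e4 : {p ∈ invSet n (u ∘ affT n a b) | affT n a b p.2 < affT n a b p.1}.ncard =
      (Rst n a b).ncard - (invSet n u ∩ Rst n a b).ncard := by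
    rw [hset4, Set.ncard_image_of_injOn hinj4]
    have hdd : Rst n a b \ invSet n u = Rst n a b \ (invSet n u ∩ Rst n a b) := by
      ext p
      simp only [Set.mem_diff, Set.mem_inter_iff]
      tauto
    rw [hdd, Set.ncard_diff Set.inter_subset_right (hfinu.inter_of_left _)]
  -- reversed part of u
  have e6 : {p ∈ invSet n u | affT n a b p.2 < affT n a b p.1} =
      invSet n u ∩ Rst n a b := by
    ext p
    constructor
    · rintro ⟨hp, h⟩
      exact ⟨hp, hp.1, hp.2.1, hp.2.2.1, h⟩
    · rintro ⟨hp, _, _, _, h⟩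
      exact ⟨hp, h⟩
  have hyr : (invSet n u ∩ Rst n a b).ncard ≤ (Rst n a b).ncard :=
    Set.ncard_le_ncard Set.inter_subset_right hRfin
  have hr := Rst_ncard hn hab hban
  -- decompose y
  have hP1fin : ({c | c ∈ Set.Ioo a b ∧ u c < u a}).Finite :=
    (Set.finite_Ioo a b).subset (fun c hc => hc.1)
  have hP2fin : ({c | c ∈ Set.Ioo a b ∧ u b < u c}).Finite :=
    (Set.finite_Ioo a b).subset (fun c hc => hc.1)
  have hsub1 : (fun c => normp n (a, c)) '' {c | c ∈ Set.Ioo a b ∧ u c < u a} ⊆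
      (fun c => normp n (a, c)) '' Set.Ioo a b :=
    Set.image_mono (fun c hc => hc.1)
  have hsub2 : (fun c => normp n (c, b)) '' {c | c ∈ Set.Ioo a b ∧ u b < u c} ⊆
      (fun c => normp n (c, b)) '' Set.Ioo a b :=
    Set.image_mono (fun c hc => hc.1)
  have hsub3 : (if u b < u a then ({normp n (a, b)} : Set (ℤ × ℤ)) else ∅) ⊆
      ({normp n (a, b)} : Set (ℤ × ℤ)) := by
    split_ifs <;> simp
  have e7 : (invSet n u ∩ Rst n a b).ncard =
      ({c | c ∈ Set.Ioo a b ∧ u c < u a}).ncard +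
      ({c | c ∈ Set.Ioo a b ∧ u b < u c}).ncard +
      (if u b < u a then 1 else 0) := by
    rw [inv_inter_Rst hn hab hban hu_eq]
    rw [Set.ncard_union_eq (((disj3 hn hab hban).mono_right hsub3).mono_left
        (Set.union_subset_union hsub1 hsub2))
        ((hP1fin.image _).union (hP2fin.image _))
        ((Set.finite_singleton _).subset hsub3),
      Set.ncard_union_eq (((disj12 hn hab hban).mono hsub1 hsub2))
        (hP1fin.image _) (hP2fin.image _),
      Set.ncard_image_of_injOn ((injOn_f1 hn).mono (fun c hc => hc.1)),
      Set.ncard_image_of_injOn ((injOn_f2 hn).mono (fun c hc => hc.1))]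
    congr 1
    split_ifs <;> simp
  -- the key numeric reduction
  have key : (affLen n (u ∘ affT n a b) = affLen n u + 1) ↔
      (invSet n u ∩ Rst n a b).ncard = (b - a - 1).toNat := by
    rw [affLen_eq, affLen_eq, e1, e2, e3, e4, e6]
    omega
  rw [key, e7]
  have hdIoo : (Set.Ioo a b).ncard = (b - a - 1).toNat := ncard_Ioo_int a b
  -- now the combinatorial equivalence
  rcases lt_trichotomy (u a) (u b) with hvab | hvab | hvab
  · by_cases hall : ∀ i : ℤ, a < i → i < b → u i < u a ∨ u b < u i
    · apply iff_of_true _ ⟨hvab, hall⟩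
      have hP12 : {c | c ∈ Set.Ioo a b ∧ u c < u a} ∪ {c | c ∈ Set.Ioo a b ∧ u b < u c} =
          Set.Ioo a b := by
        ext c
        constructor
        · rintro (hc | hc) <;> exact hc.1
        · intro hc
          rcases hall c (Set.mem_Ioo.1 hc).1 (Set.mem_Ioo.1 hc).2 with h | h
          · exact Or.inl ⟨hc, h⟩
          · exact Or.inr ⟨hc, h⟩
      have hdisj : Disjoint {c | c ∈ Set.Ioo a b ∧ u c < u a}
          {c | c ∈ Set.Ioo a b ∧ u b < u c} := by
        rw [Set.disjoint_left]
        rintro c ⟨_, h1⟩ ⟨_, h2⟩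
        omega
      have := Set.ncard_union_eq hdisj hP1fin hP2fin
      rw [hP12, hdIoo] at this
      rw [if_neg (by omega)]
      omega
    · apply iff_of_false _ (fun hC => hall hC.2)
      push_neg at hall
      obtain ⟨c0, hc01, hc02, hc03, hc04⟩ := hall
      have hsub : {c | c ∈ Set.Ioo a b ∧ u c < u a} ∪ {c | c ∈ Set.Ioo a b ∧ u b < u c} ⊆
          Set.Ioo a b \ {c0} := by
        rintro c (⟨hc, hcu⟩ | ⟨hc, hcu⟩) <;>
          exact ⟨hc, fun h => by rw [Set.mem_singleton_iff] at h; subst h; omega⟩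
      have hdisj : Disjoint {c | c ∈ Set.Ioo a b ∧ u c < u a}
          {c | c ∈ Set.Ioo a b ∧ u b < u c} := by
        rw [Set.disjoint_left]
        rintro c ⟨_, h1⟩ ⟨_, h2⟩
        omega
      have hle : ({c | c ∈ Set.Ioo a b ∧ u c < u a}).ncard +
          ({c | c ∈ Set.Ioo a b ∧ u b < u c}).ncard ≤ (Set.Ioo a b \ {c0}).ncard := by
        rw [← Set.ncard_union_eq hdisj hP1fin hP2fin]
        exact Set.ncard_le_ncard hsub ((Set.finite_Ioo a b).diff)
      have hc0mem : c0 ∈ Set.Ioo a b := Set.mem_Ioo.2 ⟨hc01, hc02⟩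
      have hdm : (Set.Ioo a b \ {c0}).ncard = (Set.Ioo a b).ncard - 1 :=
        Set.ncard_diff_singleton_of_mem hc0mem
      have hdpos : 0 < (Set.Ioo a b).ncard :=
        (Set.ncard_pos (Set.finite_Ioo a b)).2 ⟨c0, hc0mem⟩
      rw [if_neg (by omega)]
      omega
  · exfalso
    have := hu_inj hvab
    omega
  · apply iff_of_false _ (fun hC => by have := hC.1; omega)
    have hcov : Set.Ioo a b ⊆
        {c | c ∈ Set.Ioo a b ∧ u c < u a} ∪ {c | c ∈ Set.Ioo a b ∧ u b < u c} := by
      intro c hc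
      have hne : u c ≠ u a := fun h => by
        have := hu_inj h
        have := (Set.mem_Ioo.1 hc).1
        omega
      rcases lt_or_gt_of_ne hne with h | h
      · exact Or.inl ⟨hc, h⟩
      · exact Or.inr ⟨hc, by omega⟩
    have hle : (Set.Ioo a b).ncard ≤
        ({c | c ∈ Set.Ioo a b ∧ u c < u a}).ncard +
        ({c | c ∈ Set.Ioo a b ∧ u b < u c}).ncard :=
      le_trans (Set.ncard_le_ncard hcov ((hP1fin.union hP2fin)))
        (Set.ncard_union_le _ _)
    rw [if_pos hvab]
    omega

end Final


theorem stmt0 (k : ℤ) (hk : 1 ≤ k) (u : ℤ → ℤ)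
    (hu : IsAffinePerm (k + 1) u)
    (a b : ℤ) (hab : a < b) (hba : b - a ≤ k) :
    affLen (k + 1) (u ∘ affT (k + 1) a b) = affLen (k + 1) u + 1 ↔
      (u a < u b ∧ ∀ i : ℤ, a < i → i < b → u i < u a ∨ u b < u i) := by
  obtain ⟨hbij, hequiv, _⟩ := hu
  exact main_iff (by omega) hab (by omega) hbij.injective hequiv
end

section
/- If u is a 0-grassmannian affine permutation and the operator t_{a,b} is defined at u, then u ∘ t_{a,b} is again a 0-grassmannian affine permutation. -/
open Function

section
variable {n a b : ℤ} (hn : 0 < n) (hd : 0 < b - a) (hdn : b - a < n)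

lemma rep_of_mod {i c : ℤ} (h : (i - c) % n = 0) : ∃ m, i = c + m * n := by
  obtain ⟨m, hm⟩ := Int.dvd_of_emod_eq_zero h
  exact ⟨m, by linarith [mul_comm n m]⟩

lemma affT_a (m : ℤ) : affT n a b (a + m * n) = b + m * n := by
  unfold affT
  rw [if_pos (by simp [add_sub_cancel_left, Int.mul_emod_left])]
  ring

include hd hdn in
lemma ba_mod : (b - a) % n ≠ 0 := by
  rw [Int.emod_eq_of_lt (by omega) hdn]; omega

include hd hdn in
lemma not_both {i : ℤ} (h : (i - a) % n = 0) : (i - b) % n ≠ 0 := by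
  intro h2
  apply ba_mod hd hdn
  obtain ⟨m, hm⟩ := rep_of_mod h
  have : i - b = (a - b) + m * n := by omega
  rw [this, Int.add_mul_emod_self_right] at h2
  have h3 := Int.dvd_of_emod_eq_zero h2
  have h4 : n ∣ b - a := by simpa using dvd_neg.mpr h3
  exact Int.emod_eq_zero_of_dvd h4

include hd hdn in
lemma affT_b (m : ℤ) : affT n a b (b + m * n) = a + m * n := by
  unfold affT
  rw [if_neg, if_pos (by simp [add_sub_cancel_left, Int.mul_emod_left])]
  · ring
  · intro h
    apply ba_mod hd hdn
    have : b + m * n - a = (b - a) + m * n := by ring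
    rw [this, Int.add_mul_emod_self_right] at h
    exact h

lemma affT_fix {i : ℤ} (h1 : (i - a) % n ≠ 0) (h2 : (i - b) % n ≠ 0) :
    affT n a b i = i := by
  unfold affT; rw [if_neg h1, if_neg h2]

include hd hdn in
lemma affT_invol_s1 : Function.Involutive (affT n a b) := by
  intro i
  by_cases h1 : (i - a) % n = 0
  · obtain ⟨m, rfl⟩ := rep_of_mod h1
    rw [affT_a, affT_b hd hdn]
  · by_cases h2 : (i - b) % n = 0
    · obtain ⟨m, rfl⟩ := rep_of_mod h2
      rw [affT_b hd hdn, affT_a]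
    · rw [affT_fix h1 h2, affT_fix h1 h2]

lemma affT_period (i : ℤ) : affT n a b (i + n) = affT n a b i + n := by
  unfold affT
  have e1 : i + n - a = (i - a) + 1 * n := by ring
  have e2 : i + n - b = (i - b) + 1 * n := by ring
  rw [e1, e2, Int.add_mul_emod_self_right]
  by_cases h1 : (i - a) % n = 0
  · rw [if_pos h1, if_pos h1]; ring
  · rw [if_neg h1, if_neg h1, Int.add_mul_emod_self_right]
    by_cases h2 : (i - b) % n = 0
    · rw [if_pos h2, if_pos h2]; ring
    · rw [if_neg h2, if_neg h2]
end

section main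
variable {n a b : ℤ} {u : ℤ → ℤ}

lemma shift (hper : ∀ i : ℤ, u (i + n) = u i + n) (x m : ℤ) :
    u (x + m * n) = u x + m * n := by
  induction m using Int.induction_on with
  | zero => simp
  | succ m ih =>
    have : x + (m + 1) * n = (x + m * n) + n := by ring
    rw [this, hper, ih]; ring
  | pred m ih =>
    have h2 : x + (-m) * n = (x + (-m - 1) * n) + n := by ring
    have := hper (x + (-m - 1) * n)
    rw [← h2, ih] at this
    linarith

/-- key monotonicity lemma -/
lemma key (hn : 0 < n) (hd : 0 < b - a) (hdn : b - a < n)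
    (hper : ∀ i : ℤ, u (i + n) = u i + n)
    (ha : u a ≤ 0) (hb : 0 < u b)
    (hbet : ∀ i : ℤ, a < i → i < b → u i < u a ∨ u b < u i)
    {P Q : ℤ} (hPQ : P < Q) (h1 : 1 ≤ u P) (h2 : u P < u Q) (h3 : u Q ≤ n) :
    affT n a b P < affT n a b Q := by
  by_cases hPa : (P - a) % n = 0
  · -- P in class a
    obtain ⟨p, rfl⟩ := rep_of_mod hPa
    rw [affT_a]
    have huP : u (a + p * n) = u a + p * n := shift hper a p
    have hp1 : 1 ≤ p := by
      by_contra h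
      push_neg at h
      have : p * n ≤ 0 := mul_nonpos_iff.mpr (Or.inr ⟨by omega, by omega⟩)
      omega
    by_cases hQa : (Q - a) % n = 0
    · obtain ⟨q, rfl⟩ := rep_of_mod hQa
      rw [affT_a]
      have huQ : u (a + q * n) = u a + q * n := shift hper a q
      have : p < q := by
        have : p * n < q * n := by omega
        exact lt_of_mul_lt_mul_right this (le_of_lt hn)
      nlinarith
    · by_cases hQb : (Q - b) % n = 0
      · -- vacuous
        obtain ⟨q, rfl⟩ := rep_of_mod hQb
        have huQ : u (b + q * n) = u b + q * n := shift hper b q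
        have hq0 : q ≤ 0 := by
          by_contra h
          push_neg at h
          have : n ≤ q * n := by nlinarith
          omega
        exfalso
        have hpn : n ≤ p * n := by nlinarith
        have hqn : q * n ≤ 0 := mul_nonpos_iff.mpr (Or.inr ⟨hq0, by omega⟩)
        omega
      · -- Q fixed : dangerous case
        rw [affT_fix hQa hQb]
        by_contra hcon
        push_neg at hcon
        have hne : Q ≠ b + p * n := by
          rintro rfl
          exact hQb (by simp [add_sub_cancel_left, Int.mul_emod_left])
        have hlt : Q < b + p * n := by omega
        have hgt : a < Q - p * n := by omega
        have hlt2 : Q - p * n < b := by omega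
        have huQ : u Q = u (Q - p * n) + p * n := by
          have := shift hper (Q - p * n) p
          simpa using this
        rcases hbet _ hgt hlt2 with h | h
        · omega
        · nlinarith
  · by_cases hPb : (P - b) % n = 0
    · -- P in class b
      obtain ⟨p, rfl⟩ := rep_of_mod hPb
      rw [affT_b hd hdn]
      have huP : u (b + p * n) = u b + p * n := shift hper b p
      have hp0 : p ≤ 0 := by
        by_contra h
        push_neg at h
        have : n ≤ p * n := by nlinarith
        omega
      by_cases hQa : (Q - a) % n = 0
      · obtain ⟨q, rfl⟩ := rep_of_mod hQa
        rw [affT_a]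
        have huQ : u (a + q * n) = u a + q * n := shift hper a q
        have hq1 : 1 ≤ q := by
          by_contra h
          push_neg at h
          have : q * n ≤ 0 := mul_nonpos_iff.mpr (Or.inr ⟨by omega, by omega⟩)
          omega
        have : p * n ≤ 0 := mul_nonpos_iff.mpr (Or.inr ⟨hp0, by omega⟩)
        nlinarith
      · by_cases hQb : (Q - b) % n = 0
        · obtain ⟨q, rfl⟩ := rep_of_mod hQb
          rw [affT_b hd hdn]
          omega
        · rw [affT_fix hQa hQb]; omega
    · -- P fixed
      rw [affT_fix hPa hPb]
      by_cases hQa : (Q - a) % n = 0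
      · obtain ⟨q, rfl⟩ := rep_of_mod hQa
        rw [affT_a]
        omega
      · by_cases hQb : (Q - b) % n = 0
        · -- dangerous case
          obtain ⟨q, rfl⟩ := rep_of_mod hQb
          rw [affT_b hd hdn]
          have huQ : u (b + q * n) = u b + q * n := shift hper b q
          have hq0 : q ≤ 0 := by
            by_contra h
            push_neg at h
            have : n ≤ q * n := by nlinarith
            omega
          by_contra hcon
          push_neg at hcon
          have hne : P ≠ a + q * n := by
            rintro rfl
            exact hPa (by simp [add_sub_cancel_left, Int.mul_emod_left])
          have hgt : a < P - q * n := by omega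
          have hlt2 : P - q * n < b := by omega
          have huP : u P = u (P - q * n) + q * n := by
            have := shift hper (P - q * n) q
            simpa using this
          have hqn : q * n ≤ 0 := mul_nonpos_iff.mpr (Or.inr ⟨hq0, by omega⟩)
          rcases hbet _ hgt hlt2 with h | h
          · omega
          · omega
        · rw [affT_fix hQa hQb]; omega
end main

section sum
variable {n a b : ℤ} {u : ℤ → ℤ}

lemma small_dvd (hn : 0 < n) {x : ℤ} (hx1 : -n < x) (hx2 : x < n) (h : n ∣ x) :
    x = 0 := by
  obtain ⟨c, rfl⟩ := h
  rcases le_or_gt 1 c with h1 | h1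
  · nlinarith
  · rcases le_or_gt c (-1) with h2 | h2
    · nlinarith
    · have : c = 0 := by omega
      simp [this]

lemma sum_eq (hn : 0 < n) (hd : 0 < b - a) (hdn : b - a < n)
    (hper : ∀ i : ℤ, u (i + n) = u i + n) :
    ∑ i ∈ Finset.Icc (1 : ℤ) n, u (affT n a b i) = ∑ i ∈ Finset.Icc (1 : ℤ) n, u i := by
  set a₀ := (a - 1) % n + 1 with ha₀
  set b₀ := (b - 1) % n + 1 with hb₀
  have hma := Int.mul_ediv_add_emod (a - 1) n
  have hmb := Int.mul_ediv_add_emod (b - 1) n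
  set s := (a - 1) / n with hs
  set t := (b - 1) / n with ht
  have haa : a = a₀ + s * n := by rw [ha₀]; have := mul_comm n s; omega
  have hbb : b = b₀ + t * n := by rw [hb₀]; have := mul_comm n t; omega
  have ha₀mem : a₀ ∈ Finset.Icc (1 : ℤ) n := by
    rw [Finset.mem_Icc]
    have := Int.emod_nonneg (a - 1) (ne_of_gt hn)
    have := Int.emod_lt_of_pos (a - 1) hn
    omega
  have hb₀mem : b₀ ∈ Finset.Icc (1 : ℤ) n := by
    rw [Finset.mem_Icc]
    have := Int.emod_nonneg (b - 1) (ne_of_gt hn)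
    have := Int.emod_lt_of_pos (b - 1) hn
    omega
  have hne : a₀ ≠ b₀ := by
    intro h
    have h2 : b - a = (t - s) * n := by rw [haa, hbb, h]; ring
    have : (b - a) = 0 := small_dvd hn (by omega) hdn ⟨t - s, by rw [h2]; ring⟩
    omega
  have hfix : ∀ i ∈ Finset.Icc (1 : ℤ) n, i ∉ ({a₀, b₀} : Finset ℤ) →
      u (affT n a b i) - u i = 0 := by
    intro i hi hni
    rw [Finset.mem_Icc] at hi
    simp only [Finset.mem_insert, Finset.mem_singleton] at hni
    push_neg at hni
    rw [affT_fix, sub_self]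
    · intro h
      obtain ⟨c, hc⟩ := Int.dvd_of_emod_eq_zero h
      have : i - a₀ = 0 := small_dvd hn (x := i - a₀) (by rw [Finset.mem_Icc] at ha₀mem; omega)
        (by rw [Finset.mem_Icc] at ha₀mem; omega)
        ⟨c + s, by rw [haa] at hc; rw [show n * (c + s) = n * c + s * n from by ring]; omega⟩
      omega
    · intro h
      obtain ⟨c, hc⟩ := Int.dvd_of_emod_eq_zero h
      have : i - b₀ = 0 := small_dvd hn (x := i - b₀) (by rw [Finset.mem_Icc] at hb₀mem; omega)
        (by rw [Finset.mem_Icc] at hb₀mem; omega)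
        ⟨c + t, by rw [hbb] at hc; rw [show n * (c + t) = n * c + t * n from by ring]; omega⟩
      omega
  have hsub : ({a₀, b₀} : Finset ℤ) ⊆ Finset.Icc (1 : ℤ) n := by
    intro x hx
    simp only [Finset.mem_insert, Finset.mem_singleton] at hx
    rcases hx with rfl | rfl <;> assumption
  have hkey : ∑ i ∈ Finset.Icc (1 : ℤ) n, (u (affT n a b i) - u i)
      = ∑ i ∈ ({a₀, b₀} : Finset ℤ), (u (affT n a b i) - u i) :=
    (Finset.sum_subset hsub hfix).symm
  have hfa : u (affT n a b a₀) - u a₀ = u b - u a := by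
    have h1 : a₀ = a + (-s) * n := by rw [haa]; ring
    rw [h1, affT_a, shift hper, shift hper]
    ring
  have hfb : u (affT n a b b₀) - u b₀ = u a - u b := by
    have h1 : b₀ = b + (-t) * n := by rw [hbb]; ring
    rw [h1, affT_b hd hdn, shift hper, shift hper]
    ring
  rw [Finset.sum_pair hne, hfa, hfb] at hkey
  have := Finset.sum_sub_distrib (s := Finset.Icc (1:ℤ) n)
    (f := fun i => u (affT n a b i)) (g := u)
  omega
end sum

theorem stmt1 (k : ℤ) (hk : 1 ≤ k) (u : ℤ → ℤ)
    (hu : IsAffinePerm (k + 1) u) (hg : IsGrassmannian (k + 1) u)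
    (a b : ℤ) (hab : a < b) (hba : b - a ≤ k)
    (hdef : DefinedAt u a b) :
    IsAffinePerm (k + 1) (u ∘ affT (k + 1) a b) ∧
      IsGrassmannian (k + 1) (u ∘ affT (k + 1) a b) := by
  obtain ⟨hbij, hper, hsum⟩ := hu
  obtain ⟨ha, hb, hbet⟩ := hdef
  have hn : (0:ℤ) < k + 1 := by omega
  have hd : 0 < b - a := by omega
  have hdn : b - a < k + 1 := by omega
  have hinv : Function.Involutive (affT (k+1) a b) := affT_invol_s1 hd hdn
  refine ⟨⟨hbij.comp hinv.bijective, fun i => ?_, ?_⟩, ?_⟩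
  · show u (affT (k+1) a b (i + (k+1))) = u (affT (k+1) a b i) + (k+1)
    rw [affT_period, hper]
  · show ∑ i ∈ Finset.Icc (1 : ℤ) (k+1), u (affT (k+1) a b i) = _
    rw [sum_eq hn hd hdn hper, hsum]
  · intro i j p q hi hij hj hp hq
    have hP : u (affT (k+1) a b p) = i := hp
    have hQ : u (affT (k+1) a b q) = j := hq
    have hPQ : affT (k+1) a b p < affT (k+1) a b q :=
      hg i j _ _ hi hij hj hP hQ
    have := key hn hd hdn hper ha hb hbet hPQ (by omega) (by omega) (by omega)
    rwa [hinv p, hinv q] at this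
end

section
/- Relation (B2): Let u be a 0-grassmannian affine permutation and let a < b, c < d be integers with b − a ≤ k, d − c ≤ k. If either (a ≡ c (mod n) and b ≤ d) or (b ≡ d (mod n) and c ≤ a), then the composite u·t_{a,b}·t_{c,d} is not defined. -/
open Function

lemma per_iter (n : ℤ) (u : ℤ → ℤ) (hper : ∀ i : ℤ, u (i + n) = u i + n)
    (x m : ℤ) : u (x + m * n) = u x + m * n := by
  induction m using Int.induction_on with
  | zero => simp
  | succ m ih =>
      have h := hper (x + (m : ℤ) * n)
      have e : x + ((m : ℤ) + 1) * n = x + (m : ℤ) * n + n := by ring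
      rw [e, h, ih]; ring
  | pred m ih =>
      have h := hper (x + (-(m : ℤ) - 1) * n)
      have e : x + (-(m : ℤ) - 1) * n + n = x + (-(m : ℤ)) * n := by ring
      rw [e, ih] at h
      linarith

theorem stmt5 (k : ℤ) (hk : 1 ≤ k) (u : ℤ → ℤ)
    (hu : IsAffinePerm (k + 1) u) (hg : IsGrassmannian (k + 1) u)
    (a b c d : ℤ) (hab : a < b) (hba : b - a ≤ k) (hcd : c < d) (hdc : d - c ≤ k)
    (h : (a % (k + 1) = c % (k + 1) ∧ b ≤ d) ∨ (b % (k + 1) = d % (k + 1) ∧ c ≤ a)) :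
    ¬ Def2 (k + 1) u a b c d := by
  rintro ⟨⟨hua, hub, -⟩, ⟨hvc, hvd, -⟩⟩
  set n := k + 1 with hn
  have hnpos : (0 : ℤ) < n := by omega
  obtain ⟨-, hper, -⟩ := hu
  have hper' := per_iter n u hper
  have hba' : (b - a) % n = b - a := Int.emod_eq_of_lt (by omega) (by omega)
  have hTa : ∀ m : ℤ, affT n a b (a + m * n) = b + m * n := by
    intro m
    have h1 : (a + m * n - a) % n = 0 := by
      have : a + m * n - a = m * n := by ring
      rw [this, Int.mul_emod_left]
    rw [affT]; simp only [h1, if_pos]; ring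
  have hTb : ∀ m : ℤ, affT n a b (b + m * n) = a + m * n := by
    intro m
    have h1 : (b + m * n - a) % n ≠ 0 := by
      have e : b + m * n - a = (b - a) + m * n := by ring
      rw [e, Int.add_mul_emod_self_right, hba']
      omega
    have h2 : (b + m * n - b) % n = 0 := by
      have : b + m * n - b = m * n := by ring
      rw [this, Int.mul_emod_left]
    rw [affT]; simp only [h1, if_neg, h2, if_pos, if_false]
    ring
  rcases h with ⟨hmod, hbd⟩ | ⟨hmod, hca⟩
  · have hdvd : n ∣ c - a := by
      have : (c - a) % n = 0 := by
        rw [Int.sub_emod, ← hmod, sub_self, Int.zero_emod]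
      exact Int.dvd_of_emod_eq_zero this
    obtain ⟨m, hm⟩ := hdvd
    have hc : c = a + m * n := by linarith
    have hvc' : (u ∘ affT n a b) c = u b + m * n := by
      show u (affT n a b c) = _
      rw [hc, hTa m, hper']
    rcases le_or_gt 0 m with hm0 | hm0
    · have : 0 ≤ m * n := mul_nonneg hm0 hnpos.le
      rw [hvc'] at hvc; linarith
    · have : m * n ≤ -n := by nlinarith
      omega
  · have hdvd : n ∣ d - b := by
      have : (d - b) % n = 0 := by
        rw [Int.sub_emod, ← hmod, sub_self, Int.zero_emod]
      exact Int.dvd_of_emod_eq_zero this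
    obtain ⟨m, hm⟩ := hdvd
    have hd : d = b + m * n := by linarith
    have hvd' : (u ∘ affT n a b) d = u a + m * n := by
      show u (affT n a b d) = _
      rw [hd, hTb m, hper']
    rcases le_or_gt m 0 with hm0 | hm0
    · have : m * n ≤ 0 := mul_nonpos_of_nonpos_of_nonneg hm0 hnpos.le
      rw [hvd'] at hvd; linarith
    · have : n ≤ m * n := by nlinarith
      omega
end

section
/- Relation (C1): Let u be a 0-grassmannian affine permutation, let a < b be integers with b − a ≤ k, and set d = a + n. If t_{a,b} is defined at u, then the composite u·t_{a,b}·t_{b,d} is defined if and only if the composite u·t_{a,b}·t_{b−n,a} is defined, and in that case the two resulting affine permutations are equal. -/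
open Function

theorem stmt6 (k : ℤ) (hk : 1 ≤ k) (u : ℤ → ℤ)
    (hu : IsAffinePerm (k + 1) u) (hg : IsGrassmannian (k + 1) u)
    (a b : ℤ) (hab : a < b) (hba : b - a ≤ k)
    (hdef : DefinedAt u a b) :
    (Def2 (k + 1) u a b b (a + (k + 1)) ↔ Def2 (k + 1) u a b (b - (k + 1)) a) ∧
      (Def2 (k + 1) u a b b (a + (k + 1)) →
        (u ∘ affT (k + 1) a b) ∘ affT (k + 1) b (a + (k + 1)) =
          (u ∘ affT (k + 1) a b) ∘ affT (k + 1) (b - (k + 1)) a) := by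
  clear hg
  have hdef' := hdef
  set n : ℤ := k + 1 with hn
  have hn1 : 1 ≤ n := by omega
  -- mod helper
  have hmod : ∀ x : ℤ, 0 < x → x < n → x % n ≠ 0 := by
    intro x h1 h2 h
    have hd := Int.dvd_of_emod_eq_zero h
    have := Int.le_of_dvd h1 hd
    omega
  have hmodneg : ∀ x : ℤ, -n < x → x < 0 → x % n ≠ 0 := by
    intro x h1 h2 h
    have hd := Int.dvd_of_emod_eq_zero h
    have hd' : n ∣ -x := (dvd_neg).2 hd
    have := Int.le_of_dvd (by omega) hd'
    omega
  have hshift : ∀ x : ℤ, (x + n) % n = x % n := by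
    intro x
    have := Int.add_mul_emod_self_left (a := x) (b := n) (c := 1)
    simpa using this
  have hshiftsub : ∀ x : ℤ, (x - n) % n = x % n := by
    intro x
    have := Int.add_mul_emod_self_left (a := x) (b := n) (c := -1)
    rw [show x + n * -1 = x - n by ring] at this
    exact this
  -- the two transpositions agree
  have haffeq : affT n b (a + n) = affT n (b - n) a := by
    funext i
    unfold affT
    have h1 : (i - (a + n)) % n = (i - a) % n := by
      rw [show i - (a + n) = i - a - n by ring, hshiftsub]
    have h2 : (i - (b - n)) % n = (i - b) % n := by
      rw [show i - (b - n) = i - b + n by ring, hshift]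
    rw [h1, h2]
    by_cases hb : (i - b) % n = 0 <;> by_cases ha : (i - a) % n = 0 <;>
      simp [ha, hb] <;> ring
  -- periodicity of affT
  have haffper : ∀ i : ℤ, affT n a b (i + n) = affT n a b i + n := by
    intro i
    unfold affT
    have h1 : (i + n - a) % n = (i - a) % n := by
      rw [show i + n - a = i - a + n by ring, hshift]
    have h2 : (i + n - b) % n = (i - b) % n := by
      rw [show i + n - b = i - b + n by ring, hshift]
    rw [h1, h2]
    by_cases ha : (i - a) % n = 0 <;> by_cases hb : (i - b) % n = 0 <;>
      simp [ha, hb] <;> ring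
  set v : ℤ → ℤ := u ∘ affT n a b with hv
  have hvper : ∀ i : ℤ, v (i + n) = v i + n := by
    intro i
    simp only [hv, Function.comp_apply, haffper i, hu.2.1]
  -- values of affT at special points
  have hTa : affT n a b a = b := by
    unfold affT; simp
  have hTb : affT n a b b = a := by
    unfold affT
    have hba' : (b - a) % n ≠ 0 := hmod _ (by omega) (by omega)
    simp [hba']
  have hva : v a = u b := by simp [hv, hTa]
  have hvb : v b = u a := by simp [hv, hTb]
  -- affT fixes points strictly between b and a+n, and between b-n and a
  have hfix1 : ∀ i : ℤ, b < i → i < a + n → v i = u i := by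
    intro i h1 h2
    have ha' : (i - a) % n ≠ 0 := hmod _ (by omega) (by omega)
    have hb' : (i - b) % n ≠ 0 := hmod _ (by omega) (by omega)
    simp [hv, affT, ha', hb']
  have hfix2 : ∀ i : ℤ, b - n < i → i < a → v i = u i := by
    intro i h1 h2
    have ha' : (i - a) % n ≠ 0 := hmodneg _ (by omega) (by omega)
    have hb' : (i - b) % n ≠ 0 := hmodneg _ (by omega) (by omega)
    simp [hv, affT, ha', hb']
  obtain ⟨hua, hub, -⟩ := hdef'
  have hvbn : v (b - n) = u a - n := by
    have h := hvper (b - n)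
    rw [show b - n + n = b by ring, hvb] at h
    omega
  -- the main equivalence of the second DefinedAt
  have hiff : DefinedAt v b (a + n) ↔ DefinedAt v (b - n) a := by
    constructor
    · rintro ⟨-, -, hmid⟩
      refine ⟨by rw [hvbn]; omega, by rw [hva]; omega, ?_⟩
      intro i hi1 hi2
      have h := hmid (i + n) (by omega) (by omega)
      rw [hfix1 (i + n) (by omega) (by omega), hvb, hvper a, hva, hu.2.1] at h
      rw [hfix2 i hi1 hi2, hvbn, hva]
      omega
    · rintro ⟨-, -, hmid⟩
      refine ⟨by rw [hvb]; omega, by rw [hvper a, hva]; omega, ?_⟩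
      intro i hi1 hi2
      have h := hmid (i - n) (by omega) (by omega)
      rw [hfix2 (i - n) (by omega) (by omega), hvbn, hva] at h
      have huin : u (i - n) + n = u i := by
        have h2 := hu.2.1 (i - n)
        rw [show i - n + n = i by ring] at h2
        omega
      rw [hfix1 i hi1 hi2, hvb, hvper a, hva]
      omega
  constructor
  · unfold Def2
    rw [hiff]
  · intro _
    rw [haffeq]
end

section
/- Relation (E2): Let u be a 0-grassmannian affine permutation and let a < b < c < d be integers with c − a ≤ k and d − b ≤ k. Then the composite u·t_{a,c}·t_{c,d}·t_{b,c} is defined if and only if the composite u·t_{b,c}·t_{a,b}·t_{b,d} is defined, and in that case the two resulting affine permutations are equal. -/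
open Function

section helpers
variable {n : ℤ}

lemma not_dvd_small {r : ℤ} (h0 : r ≠ 0) (h1 : -n < r) (h2 : r < n) : ¬ n ∣ r := by
  intro h
  have h3 : n ∣ |r| := (dvd_abs n r).mpr h
  have h4 : (0:ℤ) < |r| := abs_pos.mpr h0
  have h5 := Int.le_of_dvd h4 h3
  rcases abs_cases r with ⟨he, _⟩ | ⟨he, _⟩ <;> omega

lemma dvd_eq_n {x : ℤ} (hn : 0 < n) (h : n ∣ x) (h1 : 0 < x) (h2 : x < 2*n) : x = n := by
  have h3 := Int.le_of_dvd h1 h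
  have h4 : n ∣ x - n := dvd_sub h dvd_rfl
  by_contra h5
  exact not_dvd_small (by omega) (by omega) (by omega) h4

lemma trans_not {s t : ℤ} (h : n ∣ s) (hr : ¬ n ∣ (t - s)) : ¬ n ∣ t :=
  fun ht => hr (dvd_sub ht h)

lemma dvd_congr' {s t : ℤ} (h : n ∣ s) (he : t = s) : n ∣ t := he ▸ h

lemma affT_eval₁ {a b i : ℤ} (h : n ∣ (i - a)) : affT n a b i = i - a + b := by
  simp only [affT, Int.emod_emod_of_dvd]
  rw [if_pos (Int.emod_eq_zero_of_dvd h)]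

lemma affT_eval₂ {a b i : ℤ} (h1 : ¬ n ∣ (i - a)) (h2 : n ∣ (i - b)) :
    affT n a b i = i - b + a := by
  simp only [affT]
  rw [if_neg (fun hc => h1 (Int.dvd_of_emod_eq_zero hc)),
    if_pos (Int.emod_eq_zero_of_dvd h2)]

lemma affT_eval₃ {a b i : ℤ} (h1 : ¬ n ∣ (i - a)) (h2 : ¬ n ∣ (i - b)) :
    affT n a b i = i := by
  simp only [affT]
  rw [if_neg (fun hc => h1 (Int.dvd_of_emod_eq_zero hc)),
    if_neg (fun hc => h2 (Int.dvd_of_emod_eq_zero hc))]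

lemma affT_eval₁' {a b i j : ℤ} (h : n ∣ (i - a)) (hj : i - a + b = j) : affT n a b i = j :=
  hj ▸ affT_eval₁ h

lemma affT_eval₂' {a b i j : ℤ} (h1 : ¬ n ∣ (i - a)) (h2 : n ∣ (i - b)) (hj : i - b + a = j) :
    affT n a b i = j := hj ▸ affT_eval₂ h1 h2

lemma affT_fix_small {a b i : ℤ} (hx0 : i - a ≠ 0) (hx1 : -n < i - a) (hx2 : i - a < n)
    (hy0 : i - b ≠ 0) (hy1 : -n < i - b) (hy2 : i - b < n) : affT n a b i = i :=
  affT_eval₃ (not_dvd_small hx0 hx1 hx2) (not_dvd_small hy0 hy1 hy2)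

end helpers

lemma key_eq {n a b c d : ℤ} (hn : 0 < n) (hab : a < b) (hbc : b < c) (hcd : c < d)
    (hca : c - a < n) (hdb : d - b < n) (i : ℤ) :
    affT n a c (affT n c d (affT n b c i)) = affT n b c (affT n a b (affT n b d i)) := by
  by_cases hb : n ∣ i - b
  · -- case B
    rw [affT_eval₁ hb,
      affT_eval₁ (show n ∣ i - b + c - c from dvd_congr' hb (by ring)),
      affT_eval₁ hb]
    by_cases hda : n ∣ d - a
    · rw [affT_eval₁ (show n ∣ i - b + c - c + d - a from
          dvd_congr' (dvd_add hb hda) (by ring)),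
        affT_eval₁ (show n ∣ i - b + d - a from dvd_congr' (dvd_add hb hda) (by ring)),
        affT_eval₁ (show n ∣ i - b + d - a + b - b from
          dvd_congr' (dvd_add hb hda) (by ring))]
      ring
    · rw [affT_eval₃ (show ¬ n ∣ i - b + c - c + d - a from
            trans_not hb (fun h => hda (dvd_congr' h (by ring))))
          (show ¬ n ∣ i - b + c - c + d - c from
            trans_not hb (not_dvd_small (by omega) (by omega) (by omega))),
        affT_eval₃ (show ¬ n ∣ i - b + d - a from
            trans_not hb (fun h => hda (dvd_congr' h (by ring))))
          (show ¬ n ∣ i - b + d - b from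
            trans_not hb (not_dvd_small (by omega) (by omega) (by omega))),
        affT_eval₃ (show ¬ n ∣ i - b + d - b from
            trans_not hb (not_dvd_small (by omega) (by omega) (by omega)))
          (show ¬ n ∣ i - b + d - c from
            trans_not hb (not_dvd_small (by omega) (by omega) (by omega)))]
      ring
  · by_cases hc : n ∣ i - c
    · -- case C
      have hna : ¬ n ∣ i - a := trans_not hc (not_dvd_small (by omega) (by omega) (by omega))
      have hnd : ¬ n ∣ i - d := trans_not hc (not_dvd_small (by omega) (by omega) (by omega))
      rw [affT_eval₂ hb hc,
        affT_eval₃ (show ¬ n ∣ i - c + b - c from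
            trans_not hc (not_dvd_small (by omega) (by omega) (by omega)))
          (show ¬ n ∣ i - c + b - d from
            trans_not hc (not_dvd_small (by omega) (by omega) (by omega))),
        affT_eval₃ (show ¬ n ∣ i - c + b - a from
            trans_not hc (not_dvd_small (by omega) (by omega) (by omega)))
          (show ¬ n ∣ i - c + b - c from
            trans_not hc (not_dvd_small (by omega) (by omega) (by omega))),
        affT_eval₃ hb hnd, affT_eval₃ hna hb, affT_eval₂ hb hc]
    · by_cases ha : n ∣ i - a
      · by_cases hd : n ∣ i - d
        · -- case A2
          rw [affT_eval₃ hb hc, affT_eval₂ hc hd,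
            affT_eval₂ (show ¬ n ∣ i - d + c - a from
                trans_not hd (not_dvd_small (by omega) (by omega) (by omega)))
              (show n ∣ i - d + c - c from dvd_congr' hd (by ring)),
            affT_eval₂ hb hd,
            affT_eval₂ (show ¬ n ∣ i - d + b - a from
                trans_not hd (not_dvd_small (by omega) (by omega) (by omega)))
              (show n ∣ i - d + b - b from dvd_congr' hd (by ring)),
            affT_eval₃ (show ¬ n ∣ i - d + b - b + a - b from
                trans_not hd (not_dvd_small (by omega) (by omega) (by omega)))
              (show ¬ n ∣ i - d + b - b + a - c from
                trans_not hd (not_dvd_small (by omega) (by omega) (by omega)))]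
          ring
        · -- case A1
          rw [affT_eval₃ hb hc, affT_eval₃ hc hd, affT_eval₁ ha,
            affT_eval₃ hb hd, affT_eval₁ ha,
            affT_eval₁ (show n ∣ i - a + b - b from dvd_congr' ha (by ring))]
          ring
      · by_cases hd : n ∣ i - d
        · -- case D
          rw [affT_eval₃ hb hc, affT_eval₂ hc hd,
            affT_eval₂ (show ¬ n ∣ i - d + c - a from
                trans_not hd (not_dvd_small (by omega) (by omega) (by omega)))
              (show n ∣ i - d + c - c from dvd_congr' hd (by ring)),
            affT_eval₂ hb hd,
            affT_eval₂ (show ¬ n ∣ i - d + b - a from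
                trans_not hd (not_dvd_small (by omega) (by omega) (by omega)))
              (show n ∣ i - d + b - b from dvd_congr' hd (by ring)),
            affT_eval₃ (show ¬ n ∣ i - d + b - b + a - b from
                trans_not hd (not_dvd_small (by omega) (by omega) (by omega)))
              (show ¬ n ∣ i - d + b - b + a - c from
                trans_not hd (not_dvd_small (by omega) (by omega) (by omega)))]
          ring
        · rw [affT_eval₃ hb hc, affT_eval₃ hc hd, affT_eval₃ ha hc,
            affT_eval₃ hb hd, affT_eval₃ ha hb, affT_eval₃ hb hc]

lemma def3_iff {n : ℤ} (hn : 0 < n) (u : ℤ → ℤ) (hper : ∀ i : ℤ, u (i + n) = u i + n)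
    {a b c d : ℤ} (hab : a < b) (hbc : b < c) (hcd : c < d)
    (hca : c - a < n) (hdb : d - b < n) :
    Def3 n u a c c d b c ↔ Def3 n u b c a b b d := by
  have hE1 : (u ∘ affT n a c) c = u a := by
    simp only [Function.comp_apply]
    rw [show affT n a c c = a from affT_eval₂'
      (not_dvd_small (by omega) (by omega) (by omega)) (show n ∣ c - c by simp) (by ring)]
  have hE3 : ((u ∘ affT n a c) ∘ affT n c d) b = u b := by
    simp only [Function.comp_apply]
    rw [show affT n c d b = b from
        affT_fix_small (by omega) (by omega) (by omega) (by omega) (by omega) (by omega),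
      show affT n a c b = b from
        affT_fix_small (by omega) (by omega) (by omega) (by omega) (by omega) (by omega)]
  have hE4 : ((u ∘ affT n a c) ∘ affT n c d) c = (u ∘ affT n a c) d := by
    simp only [Function.comp_apply]
    rw [show affT n c d c = d from affT_eval₁' (show n ∣ c - c by simp) (by ring)]
  have hE5 : ∀ i : ℤ, b < i → i < c → ((u ∘ affT n a c) ∘ affT n c d) i = u i := by
    intro i h1 h2
    simp only [Function.comp_apply]
    rw [show affT n c d i = i from
        affT_fix_small (by omega) (by omega) (by omega) (by omega) (by omega) (by omega),
      show affT n a c i = i from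
        affT_fix_small (by omega) (by omega) (by omega) (by omega) (by omega) (by omega)]
  have hE6 : ∀ i : ℤ, c < i → i ≤ d →
      (u ∘ affT n a c) i = ((u ∘ affT n b c) ∘ affT n a b) i := by
    intro i h1 h2
    simp only [Function.comp_apply]
    by_cases hia : n ∣ i - a
    · have hin : i - a = n := dvd_eq_n hn hia (by omega) (by omega)
      rw [show affT n a c i = i - a + c from affT_eval₁ hia,
        show affT n a b i = i - a + b from affT_eval₁ hia,
        show affT n b c (i - a + b) = i - a + b - b + c from
          affT_eval₁ (dvd_congr' hia (by ring)),
        show i - a + c = c + n from by omega, show i - a + b - b + c = c + n from by omega]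
    · rw [show affT n a c i = i from
          affT_eval₃ hia (not_dvd_small (by omega) (by omega) (by omega)),
        show affT n a b i = i from
          affT_eval₃ hia (not_dvd_small (by omega) (by omega) (by omega)),
        show affT n b c i = i from
          affT_fix_small (by omega) (by omega) (by omega) (by omega) (by omega) (by omega)]
  have hE7 : ∀ i : ℤ, b < i → i < c → ((u ∘ affT n b c) ∘ affT n a b) i = u i := by
    intro i h1 h2
    simp only [Function.comp_apply]
    rw [show affT n a b i = i from
        affT_fix_small (by omega) (by omega) (by omega) (by omega) (by omega) (by omega),
      show affT n b c i = i from
        affT_fix_small (by omega) (by omega) (by omega) (by omega) (by omega) (by omega)]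
  have hE8 : ((u ∘ affT n b c) ∘ affT n a b) c = u b := by
    simp only [Function.comp_apply]
    rw [show affT n a b c = c from
        affT_fix_small (by omega) (by omega) (by omega) (by omega) (by omega) (by omega),
      show affT n b c c = b from affT_eval₂'
        (not_dvd_small (by omega) (by omega) (by omega)) (show n ∣ c - c by simp) (by ring)]
  have hE9 : (u ∘ affT n b c) a = u a := by
    simp only [Function.comp_apply]
    rw [show affT n b c a = a from
      affT_fix_small (by omega) (by omega) (by omega) (by omega) (by omega) (by omega)]
  have hE10 : (u ∘ affT n b c) b = u c := by
    simp only [Function.comp_apply]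
    rw [show affT n b c b = c from affT_eval₁' (show n ∣ b - b by simp) (by ring)]
  have hE11 : ∀ i : ℤ, a < i → i < b → (u ∘ affT n b c) i = u i := by
    intro i h1 h2
    simp only [Function.comp_apply]
    rw [show affT n b c i = i from
      affT_fix_small (by omega) (by omega) (by omega) (by omega) (by omega) (by omega)]
  have hE12 : ((u ∘ affT n b c) ∘ affT n a b) b = u a := by
    simp only [Function.comp_apply]
    rw [show affT n a b b = a from affT_eval₂'
        (not_dvd_small (by omega) (by omega) (by omega)) (show n ∣ b - b by simp) (by ring),
      show affT n b c a = a from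
        affT_fix_small (by omega) (by omega) (by omega) (by omega) (by omega) (by omega)]
  constructor
  · rintro ⟨⟨l1a, l1b, l1c⟩, ⟨l2a, l2b, l2c⟩, ⟨l3a, l3b, l3c⟩⟩
    rw [hE1] at l2a
    rw [hE3] at l3a
    rw [hE4] at l3b
    have hBA : u b < u a := by
      rcases l1c b hab hbc with h | h
      · exact h
      · omega
    refine ⟨⟨l3a, l1b, ?_⟩, ⟨?_, ?_, ?_⟩, ⟨?_, ?_, ?_⟩⟩
    · intro i h1 h2
      have h3 := l3c i h1 h2
      rw [hE5 i h1 h2, hE3, hE4] at h3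
      rcases l1c i (by omega) h2 with h4 | h4 <;> omega
    · rw [hE9]; exact l1a
    · rw [hE10]; exact l1b
    · intro i h1 h2
      rw [hE11 i h1 h2, hE9, hE10]
      exact l1c i h1 (by omega)
    · rw [hE12]; exact l1a
    · rw [← hE6 d hcd le_rfl]; exact l2b
    · intro i h1 h2
      rw [hE12, ← hE6 d hcd le_rfl]
      rcases lt_trichotomy i c with h3 | h3 | h3
      · rw [hE7 i h1 h3]
        have h4 := l3c i h1 h3
        rw [hE5 i h1 h3, hE3, hE4] at h4
        omega
      · subst h3
        rw [hE8]
        left; exact hBA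
      · rw [← hE6 i h3 (le_of_lt h2)]
        have h4 := l2c i h3 h2
        rw [hE1] at h4
        exact h4
  · rintro ⟨⟨r1a, r1b, r1c⟩, ⟨r2a, r2b, r2c⟩, ⟨r3a, r3b, r3c⟩⟩
    rw [hE9] at r2a
    rw [hE10] at r2b
    rw [hE12] at r3a
    rw [← hE6 d hcd le_rfl] at r3b
    have hBA : u b < u a := by
      have h := r3c c hbc hcd
      rw [hE8, hE12, ← hE6 d hcd le_rfl] at h
      omega
    refine ⟨⟨r3a, r1b, ?_⟩, ⟨?_, r3b, ?_⟩, ⟨?_, ?_, ?_⟩⟩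
    · intro i h1 h2
      rcases lt_trichotomy i b with h3 | h3 | h3
      · have h4 := r2c i h1 h3
        rw [hE11 i h1 h3, hE9, hE10] at h4
        exact h4
      · subst h3; left; exact hBA
      · have h4 := r1c i h3 h2
        omega
    · rw [hE1]; exact r2a
    · intro i h1 h2
      have h := r3c i (by omega) h2
      rw [← hE6 i h1 (le_of_lt h2), hE12, ← hE6 d hcd le_rfl] at h
      rw [hE1]
      exact h
    · rw [hE3]; exact r1a
    · rw [hE4]; exact r3b
    · intro i h1 h2
      rw [hE5 i h1 h2, hE3, hE4]
      have h := r1c i h1 h2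
      have h' := r3c i h1 (by omega)
      rw [hE7 i h1 h2, hE12, ← hE6 d hcd le_rfl] at h'
      omega


theorem stmt9 (k : ℤ) (hk : 1 ≤ k) (u : ℤ → ℤ)
    (hu : IsAffinePerm (k + 1) u) (hg : IsGrassmannian (k + 1) u)
    (a b c d : ℤ) (hab : a < b) (hbc : b < c) (hcd : c < d)
    (hca : c - a ≤ k) (hdb : d - b ≤ k) :
    (Def3 (k + 1) u a c c d b c ↔ Def3 (k + 1) u b c a b b d) ∧
      (Def3 (k + 1) u a c c d b c →
        ((u ∘ affT (k + 1) a c) ∘ affT (k + 1) c d) ∘ affT (k + 1) b c =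
          ((u ∘ affT (k + 1) b c) ∘ affT (k + 1) a b) ∘ affT (k + 1) b d) := by
  obtain ⟨-, hper, -⟩ := hu
  have hn : (0:ℤ) < k + 1 := by omega
  refine ⟨def3_iff hn u hper hab hbc hcd (by omega) (by omega), fun _ => ?_⟩
  funext i
  simp only [Function.comp_apply]
  exact congrArg u (key_eq hn hab hbc hcd (by omega) (by omega) i)
end

section
/- Relation (F): Let u be a 0-grassmannian affine permutation and let a < b < c be integers with c − a ≤ k. Then neither the composite u·t_{b,c}·t_{a,b}·t_{b,c} nor the composite u·t_{a,b}·t_{b,c}·t_{a,b} is defined. -/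
open Function

lemma modne (n d : ℤ) (h1 : -n < d) (h2 : d < n) (h3 : d ≠ 0) : d % n ≠ 0 := by
  intro h
  have hd : n ∣ d := Int.dvd_of_emod_eq_zero h
  have := Int.eq_zero_of_abs_lt_dvd hd (abs_lt.mpr ⟨h1, h2⟩)
  omega

theorem stmt10 (k : ℤ) (hk : 1 ≤ k) (u : ℤ → ℤ)
    (hu : IsAffinePerm (k + 1) u) (hg : IsGrassmannian (k + 1) u)
    (a b c : ℤ) (hab : a < b) (hbc : b < c) (hca : c - a ≤ k) :
    ¬ Def3 (k + 1) u b c a b b c ∧ ¬ Def3 (k + 1) u a b b c a b := by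
  have hca' : (c - a) % (k + 1) ≠ 0 := modne _ _ (by omega) (by omega) (by omega)
  have hcb' : (c - b) % (k + 1) ≠ 0 := modne _ _ (by omega) (by omega) (by omega)
  have hab' : (a - b) % (k + 1) ≠ 0 := modne _ _ (by omega) (by omega) (by omega)
  have hac' : (a - c) % (k + 1) ≠ 0 := modne _ _ (by omega) (by omega) (by omega)
  constructor
  · rintro ⟨h1, h2, h3⟩
    have hub : u b ≤ 0 := h1.1
    have h3c := h3.2.1
    have e1 : affT (k + 1) a b c = c := by
      unfold affT; rw [if_neg hca', if_neg hcb']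
    have e2 : affT (k + 1) b c c = b := by
      unfold affT; rw [if_neg hcb', if_pos (by simp)]; ring
    simp only [Function.comp_apply, e1, e2] at h3c
    omega
  · rintro ⟨h1, h2, h3⟩
    have hub : 0 < u b := h1.2.1
    have h3a := h3.1
    have e1 : affT (k + 1) b c a = a := by
      unfold affT; rw [if_neg hab', if_neg hac']
    have e2 : affT (k + 1) a b a = b := by
      unfold affT; rw [if_pos (by simp)]; ring
    simp only [Function.comp_apply, e1, e2] at h3a
    omega
end

section
/- Relation (X2): Let u be a 0-grassmannian affine permutation, let a < b < c < d be integers with b − a ≤ k and d − c ≤ k, and set q = (b − a) + (d − c). Suppose q < n, a ≡ d (mod n), and u(d) > 0. If the composite u·t_{a,b}·t_{c,d} is defined, then the composite u·t_{c,d}·t_{b−q,b} is defined and the two resulting affine permutations are equal. -/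
open Function

section Helpers
variable {n : ℤ}

lemma affT_case1 {x y : ℤ} (i : ℤ) (h : n ∣ (i - x)) : affT n x y i = i - x + y := by
  have h' : (i - x) % n = 0 := Int.emod_eq_zero_of_dvd h
  simp [affT, h']

lemma affT_case2 {x y : ℤ} (i : ℤ) (h1 : ¬ n ∣ (i - x)) (h2 : n ∣ (i - y)) :
    affT n x y i = i - y + x := by
  have h1' : (i - x) % n ≠ 0 := fun h => h1 (Int.dvd_of_emod_eq_zero h)
  have h2' : (i - y) % n = 0 := Int.emod_eq_zero_of_dvd h2
  simp [affT, h1', h2']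

lemma affT_case3 {x y : ℤ} (i : ℤ) (h1 : ¬ n ∣ (i - x)) (h2 : ¬ n ∣ (i - y)) :
    affT n x y i = i := by
  have h1' : (i - x) % n ≠ 0 := fun h => h1 (Int.dvd_of_emod_eq_zero h)
  have h2' : (i - y) % n ≠ 0 := fun h => h2 (Int.dvd_of_emod_eq_zero h)
  simp [affT, h1', h2']

end Helpers

theorem stmt13 (k : ℤ) (hk : 1 ≤ k) (u : ℤ → ℤ)
    (hu : IsAffinePerm (k + 1) u) (hg : IsGrassmannian (k + 1) u)
    (a b c d : ℤ) (hab : a < b) (hbc : b < c) (hcd : c < d)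
    (hba : b - a ≤ k) (hdc : d - c ≤ k)
    (hq : (b - a) + (d - c) < k + 1)
    (hmod : a % (k + 1) = d % (k + 1))
    (hud : 0 < u d)
    (hdef : Def2 (k + 1) u a b c d) :
    Def2 (k + 1) u c d (b - ((b - a) + (d - c))) b ∧
      (u ∘ affT (k + 1) a b) ∘ affT (k + 1) c d =
        (u ∘ affT (k + 1) c d) ∘ affT (k + 1) (b - ((b - a) + (d - c))) b := by
  set n := k + 1 with hn
  set Q := (b - a) + (d - c) with hQ
  obtain ⟨hbij, hper, hsum⟩ := hu
  obtain ⟨⟨h1a, h1b, h1m⟩, h2c, h2d, h2m⟩ := hdef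
  have hn0 : (0:ℤ) < n := by omega
  have small : ∀ x : ℤ, 0 < x → x < n → ¬ n ∣ x := by
    rintro x hx1 hx2 ⟨t, rfl⟩
    rcases lt_trichotomy t 0 with h | h | h
    · nlinarith
    · rw [h, mul_zero] at hx1; exact absurd hx1 (lt_irrefl 0)
    · nlinarith
  obtain ⟨m, hm⟩ : n ∣ d - a := Int.ModEq.dvd hmod
  have h_da : n ∣ d - a := ⟨m, hm⟩
  have hm1 : 1 ≤ m := by nlinarith
  -- periodicity for all integer multiples
  have pern : ∀ (t : ℤ), ∀ i, u (i + t * n) = u i + t * n := by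
    intro t
    induction t using Int.induction_on with
    | zero => simp
    | succ s ih =>
      intro i
      have h1 : i + ((s : ℤ) + 1) * n = (i + n) + (s : ℤ) * n := by ring
      rw [h1, ih, hper i]; ring
    | pred s ih =>
      intro i
      have h1 : u (i + (-(s:ℤ) - 1) * n + n) = u (i + (-(s:ℤ) - 1) * n) + n := hper _
      have h2 : i + (-(s:ℤ) - 1) * n + n = i + (-(s:ℤ)) * n := by ring
      rw [h2, ih i] at h1
      linarith
  -- divisibility transfer
  have E2 : ∀ X Y t : ℤ, Y = X + n * t → (n ∣ X ↔ n ∣ Y) := by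
    rintro X Y t rfl
    constructor
    · intro h; exact dvd_add h ⟨t, rfl⟩
    · intro h
      have h2 : n ∣ n * t := ⟨t, rfl⟩
      have := dvd_sub h h2
      simpa using this
  -- basic non-divisibilities
  have nd_ba : ¬ n ∣ (b - a) := small _ (by omega) (by omega)
  have nd_dc : ¬ n ∣ (d - c) := small _ (by omega) (by omega)
  have nd_Q : ¬ n ∣ Q := small _ (by omega) (by omega)
  have nd_ca : ¬ n ∣ (c - a) := fun h => nd_dc (by
    have h2 := dvd_sub h_da h
    rwa [show d - a - (c - a) = d - c from by ring] at h2)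
  have nd_cb : ¬ n ∣ (c - b) := fun h => nd_Q (by
    have h2 := dvd_sub h_da h
    rwa [show d - a - (c - b) = Q from by omega] at h2)
  -- evaluations
  have e_ab_c : affT n a b c = c := affT_case3 c nd_ca nd_cb
  have e_ab_d : affT n a b d = b + n * m := by
    rw [affT_case1 d h_da]; linarith
  have nd_bc : ¬ n ∣ (b - c) := fun h => nd_cb (by
    rw [show c - b = -(b - c) from by ring]; exact dvd_neg.mpr h)
  have nd_bd : ¬ n ∣ (b - d) := fun h => nd_ba ((E2 (b - d) (b - a) m (by linarith)).mp h)
  have e_cd_b : affT n c d b = b := affT_case3 b nd_bc nd_bd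
  have e_cd_bq : affT n c d (b - Q) = a := by
    have h : n ∣ (b - Q - c) := ⟨-m, by linarith⟩
    rw [affT_case1 _ h]; omega
  have e_cd_a : affT n c d a = b - Q := by
    have h1 : ¬ n ∣ (a - c) := fun h => nd_ca (by
      rw [show c - a = -(a - c) from by ring]; exact dvd_neg.mpr h)
    have h2 : n ∣ (a - d) := ⟨-m, by linarith⟩
    rw [affT_case2 _ h1 h2]; omega
  -- values
  have u_d : u d = u a + m * n := by
    rw [show d = a + m * n from by linarith]; exact pern m a
  have u_bm : u (b + n * m) = u b + m * n := by
    rw [show b + n * m = b + m * n from by ring]; exact pern m b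
  have u_bq : u (b - Q) = u c - m * n := by
    have h := pern (-m) c
    rw [show c + (-m) * n = b - Q from by linarith] at h
    linarith
  have uc0 : u c ≤ 0 := by
    have h := h2c
    simp only [Function.comp_apply] at h
    rwa [e_ab_c] at h
  -- cleaned-up second middle condition
  have vm : ∀ i, c < i → i < d → u i < u c ∨ u b + m * n < u i := by
    intro i hic hid
    have nia : ¬ n ∣ (i - a) := by
      intro h
      have h2 : n ∣ (d - i) := by
        have h3 := dvd_sub h_da h
        rwa [show d - a - (i - a) = d - i from by ring] at h3
      exact small (d - i) (by omega) (by omega) h2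
    have nib : ¬ n ∣ (i - b) := by
      rintro ⟨t, ht⟩
      have hb1 : n * (m - 1) < n * t := by
        have hc : c = b - Q + n * m := by linarith
        nlinarith
      have hb2 : n * t < n * m := by linarith
      have t1 : m - 1 < t := lt_of_mul_lt_mul_left hb1 (le_of_lt hn0)
      have t2 : t < m := lt_of_mul_lt_mul_left hb2 (le_of_lt hn0)
      omega
    have h := h2m i hic hid
    simp only [Function.comp_apply] at h
    rwa [e_ab_c, e_ab_d, affT_case3 i nia nib, u_bm] at h
  refine ⟨⟨⟨uc0, hud, ?_⟩, ?_, ?_, ?_⟩, ?_⟩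
  · -- middle condition for DefinedAt u c d
    intro i hic hid
    rcases vm i hic hid with h | h
    · exact Or.inl h
    · right; linarith
  · simp only [Function.comp_apply]; rw [e_cd_bq]; exact h1a
  · simp only [Function.comp_apply]; rw [e_cd_b]; exact h1b
  · -- middle condition for DefinedAt (u ∘ affT n c d) (b - Q) b
    intro i hi1 hi2
    simp only [Function.comp_apply]
    rw [e_cd_bq, e_cd_b]
    by_cases hid : n ∣ (i - d)
    · have hia : n ∣ (i - a) := by
        have h3 := dvd_add hid h_da
        rwa [show i - d + (d - a) = i - a from by ring] at h3
      have hieq : i = a := by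
        rcases lt_trichotomy i a with h | h | h
        · exfalso
          have h' : n ∣ (a - i) := by
            rw [show a - i = -(i - a) from by ring]; exact dvd_neg.mpr hia
          exact small (a - i) (by omega) (by omega) h'
        · exact h
        · exact absurd hia (small (i - a) (by omega) (by omega))
      subst hieq
      rw [e_cd_a, u_bq]
      left; linarith
    · have hic' : ¬ n ∣ (i - c) := by
        intro h
        have h2 : n ∣ (i - (b - Q)) := (E2 (i - c) _ m (by linarith)).mp h
        exact small (i - (b - Q)) (by omega) (by omega) h2
      rw [affT_case3 i hic' hid]
      rcases lt_trichotomy i a with h | h | h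
      · have hci : c < i + n * m := by linarith
        have hid2 : i + n * m < d := by linarith
        have hv := vm (i + n * m) hci hid2
        rw [show i + n * m = i + m * n from by ring, pern m i] at hv
        rcases hv with h' | h'
        · left; linarith
        · right; linarith
      · exact absurd (by rw [h, show a - d = -(d - a) from by ring]; exact dvd_neg.mpr h_da) hid
      · exact h1m i h hi2
  · -- function equality
    funext i
    simp only [Function.comp_apply]
    by_cases hia : n ∣ (i - a)
    · have hid : n ∣ (i - d) := (E2 (i - a) _ (-m) (by linarith)).mp hia
      have hic : ¬ n ∣ (i - c) := fun h => nd_ca (by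
        have h2 := dvd_sub h hia
        rwa [show i - c - (i - a) = -(c - a) from by ring, dvd_neg] at h2)
      have hib : ¬ n ∣ (i - b) := fun h => nd_ba (by
        have h2 := dvd_sub h hia
        rwa [show i - b - (i - a) = -(b - a) from by ring, dvd_neg] at h2)
      have hibq : ¬ n ∣ (i - (b - Q)) := fun h => hic ((E2 (i - (b - Q)) (i - c) (-m) (by linarith)).mp h)
      have h3 : ¬ n ∣ (i - d + c - a) := fun h => nd_ca (by
        have h2 := dvd_sub h hid
        rwa [show i - d + c - a - (i - d) = c - a from by ring] at h2)
      have h4 : ¬ n ∣ (i - d + c - b) := fun h => nd_cb (by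
        have h2 := dvd_sub h hid
        rwa [show i - d + c - b - (i - d) = c - b from by ring] at h2)
      rw [affT_case2 i hic hid, affT_case3 (i - d + c) h3 h4,
        affT_case3 i hibq hib, affT_case2 i hic hid]
    · by_cases hib : n ∣ (i - b)
      · have hic : ¬ n ∣ (i - c) := fun h => nd_cb (by
          have h2 := dvd_sub h hib
          rwa [show i - c - (i - b) = -(c - b) from by ring, dvd_neg] at h2)
        have hid : ¬ n ∣ (i - d) := fun h => hia ((E2 (i - d) _ m (by linarith)).mp h)
        have hibq : ¬ n ∣ (i - (b - Q)) := fun h => nd_Q (by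
          have h2 := dvd_sub h hib
          rwa [show i - (b - Q) - (i - b) = Q from by ring] at h2)
        have h5 : n ∣ (i - b + (b - Q) - c) := (E2 (i - b) _ (-m) (by linarith)).mp hib
        rw [affT_case3 i hic hid, affT_case2 i hia hib,
          affT_case2 i hibq hib, affT_case1 _ h5]
        congr 1
        omega
      · by_cases hic : n ∣ (i - c)
        · have hid : ¬ n ∣ (i - d) := fun h => nd_dc (by
            have h2 := dvd_sub hic h
            rwa [show i - c - (i - d) = d - c from by ring] at h2)
          have hja : n ∣ (i - c + d - a) := (E2 (i - c) _ m (by linarith)).mp hic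
          have hibq : n ∣ (i - (b - Q)) := (E2 (i - c) _ m (by linarith)).mp hic
          have hc1 : ¬ n ∣ (i - (b - Q) + b - c) := fun h => nd_Q (by
            have h2 := dvd_sub h hic
            rwa [show i - (b - Q) + b - c - (i - c) = Q from by ring] at h2)
          have hc2 : ¬ n ∣ (i - (b - Q) + b - d) := fun h => nd_ba (by
            have h2 := dvd_sub h hic
            rwa [show i - (b - Q) + b - d - (i - c) = Q - (d - c) from by ring,
              show Q - (d - c) = b - a from by omega] at h2)
          rw [affT_case1 i hic, affT_case1 (i - c + d) hja,
            affT_case1 i hibq, affT_case3 (i - (b - Q) + b) hc1 hc2]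
          congr 1
          omega
        · have hid : ¬ n ∣ (i - d) := fun h => hia ((E2 (i - d) _ m (by linarith)).mp h)
          have hibq : ¬ n ∣ (i - (b - Q)) := fun h => hic ((E2 (i - (b - Q)) (i - c) (-m) (by linarith)).mp h)
          rw [affT_case3 i hic hid, affT_case3 i hia hib,
            affT_case3 i hibq hib, affT_case3 i hic hid]
end

section
/- Relation (X3): Let u be a 0-grassmannian affine permutation, let a < b < c < d be integers with b − a ≤ k and d − c ≤ k, and set q = (b − a) + (d − c). Suppose q < n, b ≡ c (mod n), and u(a+q) ≤ 0. If the composite u·t_{a,b}·t_{c,d} is defined, then the composite u·t_{d−q,d}·t_{a,b} is defined and the two resulting affine permutations are equal. -/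
open Function

theorem stmt14 (k : ℤ) (hk : 1 ≤ k) (u : ℤ → ℤ)
    (hu : IsAffinePerm (k + 1) u) (hg : IsGrassmannian (k + 1) u)
    (a b c d : ℤ) (hab : a < b) (hbc : b < c) (hcd : c < d)
    (hba : b - a ≤ k) (hdc : d - c ≤ k)
    (hq : (b - a) + (d - c) < k + 1)
    (hmod : b % (k + 1) = c % (k + 1))
    (huaq : u (a + ((b - a) + (d - c))) ≤ 0)
    (hdef : Def2 (k + 1) u a b c d) :
    Def2 (k + 1) u (d - ((b - a) + (d - c))) d a b ∧
      (u ∘ affT (k + 1) a b) ∘ affT (k + 1) c d =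
        (u ∘ affT (k + 1) (d - ((b - a) + (d - c))) d) ∘ affT (k + 1) a b := by
  obtain ⟨-, hper1, -⟩ := hu
  obtain ⟨⟨hua, hub, hm1⟩, ⟨hvc, hvd, hm2⟩⟩ := hdef
  -- periodicity for arbitrary multiples
  have hper : ∀ (x t : ℤ), u (x + t * (k + 1)) = u x + t * (k + 1) := by
    intro x t
    induction t using Int.induction_on with
    | zero => simp
    | succ m ih =>
        have h := hper1 (x + (m : ℤ) * (k + 1))
        have e : x + ((m : ℤ) + 1) * (k + 1) = x + (m : ℤ) * (k + 1) + (k + 1) := by ring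
        rw [e, h, ih]; ring
    | pred m ih =>
        have h := hper1 (x + (-(m : ℤ) - 1) * (k + 1))
        have e : x + (-(m : ℤ) - 1) * (k + 1) + (k + 1) = x + (-(m : ℤ)) * (k + 1) := by ring
        rw [e, ih] at h
        have : u (x + (-(m : ℤ) - 1) * (k + 1)) = u x + (-(m : ℤ) - 1) * (k + 1) := by
          have e2 : u x + (-(m : ℤ)) * (k + 1) = u x + (-(m : ℤ) - 1) * (k + 1) + (k + 1) := by
            ring
          omega
        exact this
  have hN : (k + 1) ∣ (c - b) := Int.ModEq.dvd hmod
  have hNshift : ∀ x : ℤ, u (x + (c - b)) = u x + (c - b) := by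
    intro x
    obtain ⟨M, hM⟩ := hN
    rw [hM, mul_comm]
    exact hper x M
  have hsmall : ∀ e : ℤ, (k + 1) ∣ e → -(k + 1) < e → e < k + 1 → e = 0 := by
    intro e hd h1 h2
    rcases hd with ⟨t, rfl⟩
    rcases lt_trichotomy t 0 with h | h | h
    · nlinarith
    · simp [h]
    · nlinarith
  -- affine transposition evaluation lemmas
  have affT1 : ∀ A B i : ℤ, (k + 1) ∣ (i - A) → affT (k + 1) A B i = i - A + B := by
    intro A B i h
    have h' : (i - A) % (k + 1) = 0 := Int.emod_eq_zero_of_dvd h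
    simp [affT, h']
  have affT2 : ∀ A B i : ℤ, ¬ (k + 1) ∣ (i - A) → (k + 1) ∣ (i - B) →
      affT (k + 1) A B i = i - B + A := by
    intro A B i h1 h2
    have h1' : ¬ (i - A) % (k + 1) = 0 := fun hh => h1 (Int.dvd_of_emod_eq_zero hh)
    have h2' : (i - B) % (k + 1) = 0 := Int.emod_eq_zero_of_dvd h2
    simp [affT, h1', h2']
  have affT3 : ∀ A B i : ℤ, ¬ (k + 1) ∣ (i - A) → ¬ (k + 1) ∣ (i - B) →
      affT (k + 1) A B i = i := by
    intro A B i h1 h2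
    have h1' : ¬ (i - A) % (k + 1) = 0 := fun hh => h1 (Int.dvd_of_emod_eq_zero hh)
    have h2' : ¬ (i - B) % (k + 1) = 0 := fun hh => h2 (Int.dvd_of_emod_eq_zero hh)
    simp [affT, h1', h2']
  -- key evaluations
  have hEc : affT (k + 1) a b c = c - b + a := by
    refine affT2 a b c ?_ hN
    intro h
    have h0 := hsmall (c - a - (c - b)) (dvd_sub h hN) (by omega) (by omega)
    omega
  have hEd : affT (k + 1) a b d = d := by
    refine affT3 a b d ?_ ?_
    · intro h
      have h0 := hsmall (d - a - (c - b)) (dvd_sub h hN) (by omega) (by omega)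
      omega
    · intro h
      have h0 := hsmall (d - b - (c - b)) (dvd_sub h hN) (by omega) (by omega)
      omega
  have hEa' : affT (k + 1) (d - ((b - a) + (d - c))) d a = a + ((b - a) + (d - c)) := by
    have hda : (k + 1) ∣ (a - (d - ((b - a) + (d - c)))) := by
      have h2 := (dvd_neg).mpr hN
      rwa [show -(c - b) = a - (d - ((b - a) + (d - c))) from by ring] at h2
    rw [affT1 _ _ _ hda]; ring
  have hEb' : affT (k + 1) (d - ((b - a) + (d - c))) d b = b := by
    refine affT3 _ _ _ ?_ ?_
    · intro h
      have h0 := hsmall (b - (d - ((b - a) + (d - c))) + (c - b)) (dvd_add h hN)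
        (by omega) (by omega)
      omega
    · intro h
      have h0 := hsmall (b - d + (c - b)) (dvd_add h hN) (by omega) (by omega)
      omega
  simp only [Function.comp_apply] at hvc hvd hm2
  rw [hEc] at hvc
  rw [hEd] at hvd
  -- value relations
  have hva : u (c - b + a) = u a + (c - b) := by
    have h := hNshift a
    rwa [show a + (c - b) = c - b + a from by ring] at h
  have hvbc : u c = u b + (c - b) := by
    have h := hNshift b
    rwa [show b + (c - b) = c from by ring] at h
  have hvdd : u d = u (a + ((b - a) + (d - c))) + (c - b) := by
    have h := hNshift (a + ((b - a) + (d - c)))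
    rwa [show a + ((b - a) + (d - c)) + (c - b) = d from by ring] at h
  have K1 : u d < u c := by omega
  have K2 : u a < u (a + ((b - a) + (d - c))) := by omega
  refine ⟨⟨⟨?_, hvd, ?_⟩, ?_, ?_, ?_⟩, ?_⟩
  · -- u (d - q) ≤ 0
    rw [show d - ((b - a) + (d - c)) = c - b + a from by ring]
    exact hvc
  · -- middle condition for t_{d-q,d}
    intro i h1 h2
    rw [show d - ((b - a) + (d - c)) = c - b + a from by ring] at h1 ⊢
    rcases lt_trichotomy i c with hic | hic | hic
    · -- c - (b-a) < i < c : shift the (a,b) window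
      have h3 := hm1 (i - (c - b)) (by omega) (by omega)
      have h4 := hNshift (i - (c - b))
      rw [show i - (c - b) + (c - b) = i from by ring] at h4
      omega
    · subst hic; omega
    · -- c < i < d : use hm2
      have hEi : affT (k + 1) a b i = i := by
        refine affT3 a b i ?_ ?_
        · intro h
          have h0 := hsmall (i - a - (c - b)) (dvd_sub h hN) (by omega) (by omega)
          omega
        · intro h
          have h0 := hsmall (i - b - (c - b)) (dvd_sub h hN) (by omega) (by omega)
          omega
      have h3 := hm2 i hic h2
      rw [hEi, hEc, hEd] at h3
      exact h3
  · -- w a = u (a + q) ≤ 0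
    simp only [Function.comp_apply]
    rw [hEa']
    exact huaq
  · -- 0 < w b = u b
    simp only [Function.comp_apply]
    rw [hEb']
    exact hub
  · -- middle condition for t_{a,b} at w
    intro i h1 h2
    simp only [Function.comp_apply]
    have hEi : affT (k + 1) (d - ((b - a) + (d - c))) d i = i := by
      refine affT3 _ _ _ ?_ ?_
      · intro h
        have h0 := hsmall (i - (d - ((b - a) + (d - c))) + (c - b)) (dvd_add h hN)
          (by omega) (by omega)
        omega
      · intro h
        have h0 := hsmall (i - d + (c - b)) (dvd_add h hN) (by omega) (by omega)
        omega
    rw [hEi, hEa', hEb']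
    have h3 := hm1 i h1 h2
    omega
  · -- the function equality
    funext i
    simp only [Function.comp_apply]
    by_cases hia : (k + 1) ∣ (i - a)
    · have hnc : ¬ (k + 1) ∣ (i - c) := by
        intro h
        have h0 := hsmall (i - c - (i - a) + (c - b)) (dvd_add (dvd_sub h hia) hN)
          (by omega) (by omega)
        omega
      have hnd : ¬ (k + 1) ∣ (i - d) := by
        intro h
        have h0 := hsmall (i - d - (i - a) + (c - b)) (dvd_add (dvd_sub h hia) hN)
          (by omega) (by omega)
        omega
      rw [affT3 c d i hnc hnd, affT1 a b i hia]
      have hn1 : ¬ (k + 1) ∣ (i - a + b - (d - ((b - a) + (d - c)))) := by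
        intro h
        have h0 := hsmall (i - a + b - (d - ((b - a) + (d - c))) - (i - a) + (c - b))
          (dvd_add (dvd_sub h hia) hN) (by omega) (by omega)
        omega
      have hn2 : ¬ (k + 1) ∣ (i - a + b - d) := by
        intro h
        have h0 := hsmall (i - a + b - d - (i - a) + (c - b)) (dvd_add (dvd_sub h hia) hN)
          (by omega) (by omega)
        omega
      rw [affT3 _ _ _ hn1 hn2]
    · by_cases hib : (k + 1) ∣ (i - b)
      · have hic : (k + 1) ∣ (i - c) := by
          have h2 := dvd_sub hib hN
          rwa [show i - b - (c - b) = i - c from by ring] at h2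
        rw [affT1 c d i hic]
        have hn1 : ¬ (k + 1) ∣ (i - c + d - a) := by
          intro h
          have h0 := hsmall (i - c + d - a - (i - b)) (dvd_sub h hib) (by omega) (by omega)
          omega
        have hn2 : ¬ (k + 1) ∣ (i - c + d - b) := by
          intro h
          have h0 := hsmall (i - c + d - b - (i - b)) (dvd_sub h hib) (by omega) (by omega)
          omega
        rw [affT3 a b _ hn1 hn2, affT2 a b i hia hib]
        have hd1 : (k + 1) ∣ (i - b + a - (d - ((b - a) + (d - c)))) := by
          have h2 := dvd_sub hib hN
          rwa [show i - b - (c - b) = i - b + a - (d - ((b - a) + (d - c))) from by ring] at h2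
        rw [affT1 _ _ _ hd1]
        congr 1
        ring
      · by_cases hid : (k + 1) ∣ (i - d)
        · have hnc : ¬ (k + 1) ∣ (i - c) := by
            intro h
            have h0 := hsmall (i - c - (i - d)) (dvd_sub h hid) (by omega) (by omega)
            omega
          rw [affT2 c d i hnc hid]
          have hn1 : ¬ (k + 1) ∣ (i - d + c - a) := by
            intro h
            have h0 := hsmall (i - d + c - a - (i - d) - (c - b))
              (dvd_sub (dvd_sub h hid) hN) (by omega) (by omega)
            omega
          have hd2 : (k + 1) ∣ (i - d + c - b) := by
            have h2 := dvd_add hid hN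
            rwa [show i - d + (c - b) = i - d + c - b from by ring] at h2
          rw [affT2 a b _ hn1 hd2]
          have hna : ¬ (k + 1) ∣ (i - a) := hia
          have hnb : ¬ (k + 1) ∣ (i - b) := hib
          rw [affT3 a b i hna hnb]
          have hn3 : ¬ (k + 1) ∣ (i - (d - ((b - a) + (d - c)))) := by
            intro h
            have h0 := hsmall (i - (d - ((b - a) + (d - c))) - (i - d))
              (dvd_sub h hid) (by omega) (by omega)
            omega
          rw [affT2 _ _ _ hn3 hid]
          congr 1
          ring
        · have hnc : ¬ (k + 1) ∣ (i - c) := by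
            intro h
            have h2 := dvd_add h hN
            rw [show i - c + (c - b) = i - b from by ring] at h2
            exact hib h2
          rw [affT3 c d i hnc hid, affT3 a b i hia hib]
          have hn3 : ¬ (k + 1) ∣ (i - (d - ((b - a) + (d - c)))) := by
            intro h
            have h2 := dvd_add h hN
            rw [show i - (d - ((b - a) + (d - c))) + (c - b) = i - a from by ring] at h2
            exact hia h2
          rw [affT3 _ _ _ hn3 hid]
end

section
/- Let 1 ≤ r ≤ k, let x : ℤ → ℤ be a bijection with x(i) = i for all i ≤ 0 and all i > n (so x permutes {1,…,n}), let u be an affine permutation, and let s be an integer such that: (i) for all 1 ≤ i < j ≤ n, u(i−s) < u(j−s) if and only if x⁻¹(i) < x⁻¹(j); and (ii) for all 1 ≤ i ≤ n, u(i−s) ≤ 0 if and only if x⁻¹(i) ≤ r. Suppose 1 ≤ a < b ≤ n satisfy x⁻¹(a) ≤ r < x⁻¹(b) and there is no c with a < c < b and x⁻¹(a) < x⁻¹(c) < x⁻¹(b) (i.e. the permutation (a,b)·x obtained by swapping the values a and b covers x in the r-Bruhat order). Then the operator t_{a−s, b−s} is defined at u. -/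
open Function

theorem stmt18 (k : ℤ) (hk : 1 ≤ k) (r : ℤ) (hr1 : 1 ≤ r) (hrk : r ≤ k)
    (x : ℤ → ℤ) (hx : Function.Bijective x)
    (hx0 : ∀ i : ℤ, i ≤ 0 → x i = i) (hxn : ∀ i : ℤ, k + 1 < i → x i = i)
    (u : ℤ → ℤ) (hu : IsAffinePerm (k + 1) u) (s : ℤ)
    (hord : ∀ i j : ℤ, 1 ≤ i → i < j → j ≤ k + 1 →
      (u (i - s) < u (j - s) ↔ Function.invFun x i < Function.invFun x j))
    (hsgn : ∀ i : ℤ, 1 ≤ i → i ≤ k + 1 →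
      (u (i - s) ≤ 0 ↔ Function.invFun x i ≤ r))
    (a b : ℤ) (ha : 1 ≤ a) (hab : a < b) (hb : b ≤ k + 1)
    (hcov1 : Function.invFun x a ≤ r) (hcov2 : r < Function.invFun x b)
    (hcov3 : ¬ ∃ c : ℤ, a < c ∧ c < b ∧
      Function.invFun x a < Function.invFun x c ∧
      Function.invFun x c < Function.invFun x b) :
    DefinedAt u (a - s) (b - s) := by
  have uinj : Function.Injective u := hu.1.1
  have hinvinj : Function.Injective (Function.invFun x) :=
    (Function.rightInverse_invFun hx.2).injective
  have h1 : u (a - s) ≤ 0 := (hsgn a ha (by linarith)).2 hcov1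
  have h2 : 0 < u (b - s) := by
    by_contra h
    exact absurd ((hsgn b (by linarith) hb).1 (by linarith)) (by linarith)
  refine ⟨h1, h2, ?_⟩
  intro i hi1 hi2
  set c := i + s with hc
  have hci : i = c - s := by linarith
  have hac : a < c := by linarith
  have hcb : c < b := by linarith
  have h1c : 1 ≤ c := by linarith
  have hck : c ≤ k + 1 := by linarith
  have hAC := hord a c ha hac hck
  have hCB := hord c b h1c hcb hb
  rcases lt_trichotomy (Function.invFun x a) (Function.invFun x c) with h|h|h
  · rcases lt_trichotomy (Function.invFun x c) (Function.invFun x b) with h'|h'|h'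
    · exact absurd ⟨c, hac, hcb, h, h'⟩ hcov3
    · exact absurd (hinvinj h') (by omega)
    · right
      rcases lt_trichotomy (u (c - s)) (u (b - s)) with h''|h''|h''
      · exact absurd (hCB.1 h'') (by omega)
      · exact absurd (uinj h'') (by omega)
      · rw [hci]; exact h''
  · exact absurd (hinvinj h) (by omega)
  · left
    rcases lt_trichotomy (u (a - s)) (u (c - s)) with h''|h''|h''
    · exact absurd (hAC.1 h'') (by omega)
    · exact absurd (uinj h'') (by omega)
    · rw [hci]; exact h''
end
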